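/- arXiv:1607.03295 — 6 statements merged into one kernel-verified Lean document; each statement's English description precedes it below -/
import Mathlib

section
/- Let n ∈ ℕ, s ∈ [0,T), t ∈ [0,s], and let ψ : [0,T] → [0,∞] be a non-increasing function. Then Σ_{r∈[s,T]} q^{n,[s,T]}(r) ψ(r) ≤ Σ_{r∈[t,T]} q^{n,[t,T]}(r) ψ(r). -/
open MeasureTheory ProbabilityTheory ENNReal

noncomputable section

/-- The `n`-th Legendre polynomial (Rodrigues formula), as a function `ℝ → ℝ`. -/
def legendreP (n : ℕ) : ℝ → ℝ :=
  fun x => (1 / (2 ^ n * (n.factorial : ℝ))) * iteratedDeriv n (fun y : ℝ => (y ^ 2 - 1) ^ n) x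

/-- The set of roots of the `n`-th Legendre polynomial in `[-1,1]`. -/
def legRoots (n : ℕ) : Set ℝ :=
  {c | c ∈ Set.Icc (-1 : ℝ) 1 ∧ legendreP n c = 0}

open Classical in
def glWeight (n : ℕ) (a b t : ℝ) : ℝ :=
  if a < b ∧ (2 * t - (a + b)) / (b - a) ∈ legRoots n then
    ∫ x in a..b, ∏ᶠ c ∈ legRoots n \ {(2 * t - (a + b)) / (b - a)},
      (2 * x - (b - a) * c - (a + b)) / (2 * t - (b - a) * c - (a + b))
  else 0

/-- The iterated quadrature weights `\bar q^{n,Q}` on `[0,T]`. -/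
def qbar (T : ℝ) (Q : ℕ) : ℕ → ℝ → ℝ
  | 0 => fun t => if t = 0 then 1 else 0
  | n + 1 => fun t => ∑ᶠ s ∈ Set.Icc (0 : ℝ) t, qbar T Q n s * glWeight Q s T t

/-- Standard `d`-dimensional Brownian motion (independent coordinates, Gaussian
increments, independent increments, continuous paths started at `0`). -/
def IsStdBM {Ω : Type*} [MeasurableSpace Ω] (P : Measure Ω) (d : ℕ)
    (W : ℝ → Ω → (Fin d → ℝ)) : Prop :=
  (∀ ω, W 0 ω = 0) ∧
  (∀ ω, Continuous fun t => W t ω) ∧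
  (∀ t, Measurable (W t)) ∧
  (∀ s t : ℝ, 0 ≤ s → s ≤ t → ∀ i : Fin d,
    Measure.map (fun ω => W t ω i - W s ω i) P = gaussianReal 0 (Real.toNNReal (t - s))) ∧
  (∀ t : ℕ → ℝ, Monotone t →
    iIndepFun
      (fun (p : ℕ × Fin d) ω => W (t (p.1 + 1)) ω p.2 - W (t p.1) ω p.2) P)

/-- The semi-norm `‖·‖_{n,Q}` on random fields. -/
def semiNorm {Ω : Type*} [MeasurableSpace Ω] (P : Measure Ω) {d : ℕ}
    (W : ℝ → Ω → (Fin d → ℝ)) (T : ℝ) (n Q : ℕ)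
    (V : ℝ → (Fin d → ℝ) → Ω → ℝ) : ℝ≥0∞ :=
  ∑ᶠ t ∈ Set.Icc (0 : ℝ) T, ENNReal.ofReal (qbar T Q n t) *
    ⨆ s ∈ Set.Icc t T, ⨆ u ∈ Set.Icc (0 : ℝ) s, ⨆ z : Fin d → ℝ,
      (∫⁻ ω, ENNReal.ofReal ((V s (z + W u ω) ω) ^ 2) ∂P) ^ (1 / 2 : ℝ)

/-- The `L²(P;ℝ)` norm, valued in `[0,∞]`. -/
def l2Norm {Ω : Type*} [MeasurableSpace Ω] (P : Measure Ω) (X : Ω → ℝ) : ℝ≥0∞ :=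
  (∫⁻ ω, ENNReal.ofReal ((X ω) ^ 2) ∂P) ^ (1 / 2 : ℝ)

/-- The heat operator `u ↦ ∂_t u + (1/2) Δ_x u`. -/
def heatOp {d : ℕ} (u : ℝ → (Fin d → ℝ) → ℝ) : ℝ → (Fin d → ℝ) → ℝ :=
  fun t x => deriv (fun s => u s x) t +
    (1 / 2) * ∑ i : Fin d, iteratedDeriv 2 (fun y => u t (Function.update x i y)) (x i)

/-- `C^{1,2}` regularity: jointly `C¹` with continuous second spatial derivatives. -/
def IsC12 {d : ℕ} (u : ℝ → (Fin d → ℝ) → ℝ) : Prop :=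
  ContDiff ℝ 1 (fun p : ℝ × (Fin d → ℝ) => u p.1 p.2) ∧
  ∀ i : Fin d, Continuous fun p : ℝ × (Fin d → ℝ) =>
    iteratedDeriv 2 (fun y => u p.1 (Function.update p.2 i y)) (p.2 i)

end


noncomputable section AuxGL

private lemma deriv_iterate_eval (k : ℕ) (q : Polynomial ℝ) :
    deriv^[k] (fun y : ℝ => q.eval y) = fun y => ((Polynomial.derivative)^[k] q).eval y := by
  induction k generalizing q with
  | zero => simp
  | succ k ih =>
    rw [Function.iterate_succ_apply, Function.iterate_succ_apply,
      show deriv (fun y : ℝ => q.eval y) = fun y => (Polynomial.derivative q).eval y from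
        funext fun y => Polynomial.deriv (p := q)]
    exact ih _

private lemma legRoots_finite (n : ℕ) (hn : 1 ≤ n) : (legRoots n).Finite := by
  set p : Polynomial ℝ := ((Polynomial.X ^ 2 - 1 : Polynomial ℝ)) ^ n with hp
  have hdeg : p.natDegree = 2 * n := by
    have h2 : (Polynomial.X ^ 2 - 1 : Polynomial ℝ).natDegree = 2 := by
      simpa using Polynomial.natDegree_X_pow_sub_C (n := 2) (r := (1 : ℝ))
    simp [hp, Polynomial.natDegree_pow, h2, mul_comm]
  have hiter : ∀ k, k ≤ n → ((Polynomial.derivative)^[k] p).natDegree = 2 * n - k := by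
    intro k
    induction k with
    | zero => intro _; simpa using hdeg
    | succ k ih =>
      intro hk
      have hk' : ((Polynomial.derivative)^[k] p).natDegree = 2 * n - k := ih (by omega)
      have hpos : 0 < ((Polynomial.derivative)^[k] p).natDegree := by omega
      rw [Function.iterate_succ_apply']
      have hdd := Polynomial.degree_derivative_eq _ hpos
      have := Polynomial.natDegree_eq_of_degree_eq_some hdd
      omega
  have hq : (Polynomial.derivative)^[n] p ≠ 0 := by
    intro h0
    have := hiter n le_rfl
    rw [h0] at this
    simp at this
    omega
  have heval : iteratedDeriv n (fun y : ℝ => (y ^ 2 - 1) ^ n)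
      = fun y => ((Polynomial.derivative)^[n] p).eval y := by
    rw [iteratedDeriv_eq_iterate,
      show (fun y : ℝ => (y ^ 2 - 1) ^ n) = fun y => p.eval y from funext fun y => by simp [hp]]
    exact deriv_iterate_eval n p
  refine (Polynomial.finite_setOf_isRoot hq).subset fun c hc => ?_
  obtain ⟨-, h0⟩ := hc
  have hconst : (1 / (2 ^ n * (n.factorial : ℝ))) ≠ 0 := by positivity
  have : iteratedDeriv n (fun y : ℝ => (y ^ 2 - 1) ^ n) c = 0 := by
    have := h0
    unfold legendreP at this
    exact (mul_eq_zero.1 this).resolve_left hconst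
  rw [heval] at this
  exact this

private def glNode (T a c : ℝ) : ℝ := ((T - a) * c + (a + T)) / 2

private def glI (n : ℕ) (c : ℝ) : ℝ :=
  ∫ y in (-1 : ℝ)..1, ∏ᶠ c' ∈ legRoots n \ {c}, (y - c') / (c - c')

private lemma glNode_eq {T a r : ℝ} (h : T - a ≠ 0) :
    glNode T a ((2 * r - (a + T)) / (T - a)) = r := by
  unfold glNode; field_simp; ring

private lemma glNode_mem {T a c : ℝ} (haT : a ≤ T) (hc : c ∈ Set.Icc (-1 : ℝ) 1) :
    glNode T a c ∈ Set.Icc a T := by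
  obtain ⟨h1, h2⟩ := hc
  unfold glNode
  constructor
  · nlinarith [mul_nonneg (sub_nonneg.2 haT) (by linarith : (0 : ℝ) ≤ c + 1)]
  · nlinarith [mul_nonneg (sub_nonneg.2 haT) (by linarith : (0 : ℝ) ≤ 1 - c)]

private lemma glWeight_node {T a c : ℝ} (haT : a < T) (n : ℕ) (hc : c ∈ legRoots n) :
    glWeight n a T (glNode T a c) = ((T - a) / 2) * glI n c := by
  have h : T - a ≠ 0 := by linarith
  have h2 : (2 : ℝ) / (T - a) ≠ 0 := by positivity
  have hc0 : (2 * glNode T a c - (a + T)) / (T - a) = c := by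
    unfold glNode; field_simp; ring
  rw [glWeight, if_pos ⟨haT, by rw [hc0]; exact hc⟩, hc0]
  have hEq : Set.EqOn
      (fun x : ℝ => ∏ᶠ c' ∈ legRoots n \ {c},
        (2 * x - (T - a) * c' - (a + T)) / (2 * glNode T a c - (T - a) * c' - (a + T)))
      (fun x : ℝ => (fun y : ℝ => ∏ᶠ c' ∈ legRoots n \ {c}, (y - c') / (c - c'))
        (2 / (T - a) * x + -(a + T) / (T - a)))
      (Set.uIcc a T) := by
    intro x _
    refine finprod_mem_congr rfl fun c' _ => ?_
    have h1 : 2 * x - (T - a) * c' - (a + T)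
        = (T - a) * ((2 / (T - a) * x + -(a + T) / (T - a)) - c') := by
      field_simp; ring
    have h2' : 2 * glNode T a c - (T - a) * c' - (a + T) = (T - a) * (c - c') := by
      unfold glNode; field_simp; ring
    rw [h1, h2', mul_div_mul_left _ _ h]
  rw [intervalIntegral.integral_congr hEq,
    intervalIntegral.integral_comp_mul_add
      (fun y : ℝ => ∏ᶠ c' ∈ legRoots n \ {c}, (y - c') / (c - c')) h2 (-(a + T) / (T - a))]
  have hlo : 2 / (T - a) * a + -(a + T) / (T - a) = -1 := by field_simp; ring
  have hhi : 2 / (T - a) * T + -(a + T) / (T - a) = 1 := by field_simp; ring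
  rw [hlo, hhi, smul_eq_mul, inv_div, glI]

private lemma glSum_eq (T : ℝ) (n : ℕ) (hRfin : (legRoots n).Finite) {a : ℝ} (haT : a < T)
    (ψ : ℝ → ℝ≥0∞) :
    ∑ᶠ r ∈ Set.Icc a T, ENNReal.ofReal (glWeight n a T r) * ψ r
      = ∑ c ∈ hRfin.toFinset,
          ENNReal.ofReal (((T - a) / 2) * glI n c) * ψ (glNode T a c) := by
  have h : T - a ≠ 0 := by linarith
  have hinj : ∀ x ∈ hRfin.toFinset, ∀ y ∈ hRfin.toFinset,
      glNode T a x = glNode T a y → x = y := by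
    intro x _ y _ hxy
    unfold glNode at hxy
    have hx : (T - a) * x = (T - a) * y := by linarith
    exact mul_left_cancel₀ h hx
  have hsupp : Set.Icc a T ∩ Function.support
        (fun r => ENNReal.ofReal (glWeight n a T r) * ψ r)
      = ↑(hRfin.toFinset.image (glNode T a)) ∩ Function.support
        (fun r => ENNReal.ofReal (glWeight n a T r) * ψ r) := by
    ext r
    simp only [Set.mem_inter_iff, Function.mem_support, Finset.coe_image, Set.mem_image,
      Finset.mem_coe, Set.Finite.mem_toFinset]
    constructor
    · rintro ⟨hrIcc, hne⟩
      refine ⟨?_, hne⟩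
      have hglne : glWeight n a T r ≠ 0 := by
        intro h0
        apply hne
        rw [h0]
        simp
      by_cases hcond : a < T ∧ (2 * r - (a + T)) / (T - a) ∈ legRoots n
      · exact ⟨(2 * r - (a + T)) / (T - a), hcond.2, glNode_eq h⟩
      · rw [glWeight, if_neg hcond] at hglne
        exact absurd rfl hglne
    · rintro ⟨⟨c, hc, rfl⟩, hne⟩
      exact ⟨glNode_mem haT.le hc.1, hne⟩
  rw [finsum_mem_eq_sum_of_inter_support_eq _ hsupp, Finset.sum_image hinj]
  refine Finset.sum_congr rfl fun c hc => ?_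
  rw [glWeight_node haT n (hRfin.mem_toFinset.1 hc)]

end AuxGL

theorem stmt0 (T : ℝ) (hT : 0 < T) (n : ℕ) (hn : 1 ≤ n)
    (s : ℝ) (hs : s ∈ Set.Ico (0 : ℝ) T) (t : ℝ) (ht : t ∈ Set.Icc (0 : ℝ) s)
    (ψ : ℝ → ℝ≥0∞) (hψ : AntitoneOn ψ (Set.Icc (0 : ℝ) T)) :
    (∑ᶠ r ∈ Set.Icc s T, ENNReal.ofReal (glWeight n s T r) * ψ r)
      ≤ ∑ᶠ r ∈ Set.Icc t T, ENNReal.ofReal (glWeight n t T r) * ψ r := by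
  have hRfin := legRoots_finite n hn
  have hsT : s < T := hs.2
  have htT : t < T := lt_of_le_of_lt ht.2 hs.2
  have ht0 : 0 ≤ t := ht.1
  have hs0 : 0 ≤ s := hs.1
  have hts : t ≤ s := ht.2
  rw [glSum_eq T n hRfin hsT ψ, glSum_eq T n hRfin htT ψ]
  refine Finset.sum_le_sum fun c hc => ?_
  have hcR : c ∈ legRoots n := hRfin.mem_toFinset.1 hc
  have hcI : c ∈ Set.Icc (-1 : ℝ) 1 := hcR.1
  have hmemS : glNode T s c ∈ Set.Icc (0 : ℝ) T :=
    ⟨le_trans hs0 (glNode_mem hsT.le hcI).1, (glNode_mem hsT.le hcI).2⟩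
  have hmemT : glNode T t c ∈ Set.Icc (0 : ℝ) T :=
    ⟨le_trans ht0 (glNode_mem htT.le hcI).1, (glNode_mem htT.le hcI).2⟩
  have hnode : glNode T t c ≤ glNode T s c := by
    unfold glNode
    nlinarith [mul_nonneg (sub_nonneg.2 hts) (by linarith [hcI.2] : (0 : ℝ) ≤ 1 - c)]
  rcases le_or_gt (glI n c) 0 with hI | hI
  · have h0 : ((T - s) / 2) * glI n c ≤ 0 :=
      mul_nonpos_iff.2 (Or.inl ⟨by linarith, hI⟩)
    rw [ENNReal.ofReal_of_nonpos h0, zero_mul]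
    exact zero_le
  · refine mul_le_mul' (ENNReal.ofReal_le_ofReal ?_) (hψ hmemT hmemS hnode)
    exact mul_le_mul_of_nonneg_right (by linarith) hI.le
end

section
/- Let Q ∈ ℕ. Then for all n ∈ ℕ_0 and all k ∈ ℕ_0 with k < 2Q − n it holds that Σ_{t∈[0,T]} \bar q^{n,Q}(t) (T−t)^k / k! = T^{n+k} / (n+k)!. -/
open MeasureTheory ProbabilityTheory ENNReal

section GLAuxSection
open Polynomial intervalIntegral

namespace GLAux

noncomputable def PQ (Q : ℕ) : ℝ[X] := (X ^ 2 - 1) ^ Q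

noncomputable def fQ (Q j : ℕ) : ℝ[X] := derivative^[j] (PQ Q)

lemma fQ_zero (Q : ℕ) : fQ Q 0 = PQ Q := rfl

lemma fQ_succ (Q j : ℕ) : fQ Q (j + 1) = derivative (fQ Q j) :=
  Function.iterate_succ_apply' _ _ _

lemma monic_X_sq_sub_one : ((X : ℝ[X]) ^ 2 - 1).Monic := by
  have : ((X : ℝ[X]) ^ 2 - 1) = X ^ 2 - C 1 := by rw [C_1]
  rw [this]
  exact monic_X_pow_sub_C 1 two_ne_zero

lemma monic_PQ (Q : ℕ) : (PQ Q).Monic := monic_X_sq_sub_one.pow _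

lemma natDegree_PQ (Q : ℕ) : (PQ Q).natDegree = 2 * Q := by
  have h1 : ((X:ℝ[X]) ^ 2 - 1).natDegree = 2 := by
    compute_degree!
  rw [PQ, monic_X_sq_sub_one.natDegree_pow, h1, Nat.mul_comm]

lemma coeff_fQ_top (Q j : ℕ) (hj : j ≤ 2 * Q) :
    (fQ Q j).coeff (2 * Q - j) ≠ 0 := by
  rw [fQ, Polynomial.coeff_iterate_derivative]
  have h : 2 * Q - j + j = 2 * Q := by omega
  rw [h]
  have h2 : (PQ Q).coeff (2 * Q) = 1 := by
    have := (monic_PQ Q).coeff_natDegree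
    rwa [natDegree_PQ] at this
  rw [h2]
  have hd : (2 * Q).descFactorial j ≠ 0 := by
    rw [ne_eq, Nat.descFactorial_eq_zero_iff_lt]; omega
  rw [nsmul_eq_mul, mul_one, ne_eq, Nat.cast_eq_zero]
  exact hd

lemma fQ_ne_zero (Q j : ℕ) (hj : j ≤ 2 * Q) : fQ Q j ≠ 0 := fun h => by
  have := coeff_fQ_top Q j hj
  rw [h] at this; simp at this

lemma natDegree_fQ (Q j : ℕ) (hj : j ≤ 2 * Q) : (fQ Q j).natDegree = 2 * Q - j := by
  refine le_antisymm ?_ ?_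
  · have := Polynomial.natDegree_iterate_derivative (PQ Q) j
    rwa [natDegree_PQ] at this
  · exact Polynomial.le_natDegree_of_ne_zero (coeff_fQ_top Q j hj)

lemma exists_factor (Q j : ℕ) : ∃ g : ℝ[X], fQ Q j = (X ^ 2 - 1) ^ (Q - j) * g := by
  induction j with
  | zero => exact ⟨1, by rw [fQ_zero, PQ, Nat.sub_zero, mul_one]⟩
  | succ j ih =>
    obtain ⟨g, hg⟩ := ih
    rcases le_or_gt Q (j + 1) with h | h
    · exact ⟨fQ Q (j + 1), by rw [Nat.sub_eq_zero_of_le h, pow_zero, one_mul]⟩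
    · refine ⟨C ((Q - j : ℕ) : ℝ) * (2 * X) * g + (X ^ 2 - 1) * derivative g, ?_⟩
      have hQj : Q - j = (Q - (j + 1)) + 1 := by omega
      have hd : derivative ((X : ℝ[X]) ^ 2 - 1) = 2 * X := by
        rw [derivative_sub, derivative_one, derivative_X_pow, sub_zero, pow_one]
        norm_num [Nat.cast_ofNat, map_ofNat]
      rw [fQ_succ, hg, derivative_mul, derivative_pow, hd, hQj]
      simp only [Nat.succ_sub_one, Nat.cast_add, Nat.cast_one]
      ring
 
lemma eval_fQ_one (Q j : ℕ) (hj : j < Q) : (fQ Q j).eval 1 = 0 := by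
  obtain ⟨g, hg⟩ := exists_factor Q j
  have h : Q - j ≠ 0 := by omega
  rw [hg]
  simp [zero_pow h]

lemma eval_fQ_neg_one (Q j : ℕ) (hj : j < Q) : (fQ Q j).eval (-1) = 0 := by
  obtain ⟨g, hg⟩ := exists_factor Q j
  have h : Q - j ≠ 0 := by omega
  rw [hg]
  simp [zero_pow h]

end GLAux

namespace GLAux


/-- distinct roots of `fQ Q j` in the open interval. -/
noncomputable def Rset (Q j : ℕ) : Finset ℝ :=
  (fQ Q j).roots.toFinset.filter (fun x => x ∈ Set.Ioo (-1 : ℝ) 1)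

lemma mem_Rset {Q j : ℕ} {x : ℝ} :
    x ∈ Rset Q j ↔ x ∈ (fQ Q j).roots.toFinset ∧ x ∈ Set.Ioo (-1 : ℝ) 1 :=
  Finset.mem_filter

lemma card_Rset (Q : ℕ) : ∀ j ≤ Q, j ≤ (Rset Q j).card := by
  intro j
  induction j with
  | zero => intro _; exact Nat.zero_le _
  | succ j ih =>
    intro hj
    have hjQ : j < Q := hj
    have hfj : fQ Q j ≠ 0 := fQ_ne_zero Q j (by omega)
    have hfj1 : fQ Q (j + 1) ≠ 0 := fQ_ne_zero Q (j + 1) (by omega)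
    -- s : roots of fQ Q j in [-1,1] including endpoints
    set s : Finset ℝ := insert (-1 : ℝ) (insert (1 : ℝ) (Rset Q j)) with hs
    have hnotmem1 : (1 : ℝ) ∉ Rset Q j := by
      intro h; exact absurd (mem_Rset.1 h).2 (by simp)
    have hnotmemneg : (-1 : ℝ) ∉ insert (1 : ℝ) (Rset Q j) := by
      intro h
      rcases Finset.mem_insert.1 h with h | h
      · norm_num at h
      · exact absurd (mem_Rset.1 h).2 (by simp)
    have hcards : s.card = (Rset Q j).card + 2 := by
      rw [hs, Finset.card_insert_of_notMem hnotmemneg,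
        Finset.card_insert_of_notMem hnotmem1]
    have hroot : ∀ x ∈ s, (fQ Q j).eval x = 0 := by
      intro x hx
      rcases Finset.mem_insert.1 hx with rfl | hx
      · exact eval_fQ_neg_one Q j hjQ
      rcases Finset.mem_insert.1 hx with rfl | hx
      · exact eval_fQ_one Q j hjQ
      · have := (mem_Rset.1 hx).1
        rw [Multiset.mem_toFinset, mem_roots hfj] at this
        exact this
    have hsIcc : ∀ x ∈ s, x ∈ Set.Icc (-1 : ℝ) 1 := by
      intro x hx
      rcases Finset.mem_insert.1 hx with rfl | hx
      · constructor <;> norm_num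
      rcases Finset.mem_insert.1 hx with rfl | hx
      · constructor <;> norm_num
      · exact Set.Ioo_subset_Icc_self (mem_Rset.1 hx).2
    set t : Finset ℝ := Rset Q (j + 1) ∪ s with ht
    have hinter : s.card ≤ (t \ s).card + 1 := by
      apply Finset.card_le_diff_of_interleaved
      intro x hx y hy hxy _
      obtain ⟨z, hz, hz0⟩ := exists_deriv_eq_zero (f := fun x => (fQ Q j).eval x) hxy
        ((fQ Q j).continuous.continuousOn)
        ((hroot x hx).trans (hroot y hy).symm)
      refine ⟨z, ?_, hz.1, hz.2⟩
      rw [Polynomial.deriv] at hz0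
      have hzIoo : z ∈ Set.Ioo (-1 : ℝ) 1 := by
        have hxI := hsIcc x hx; have hyI := hsIcc y hy
        exact ⟨lt_of_le_of_lt hxI.1 hz.1, lt_of_lt_of_le hz.2 hyI.2⟩
      have : z ∈ Rset Q (j + 1) := by
        rw [mem_Rset, Multiset.mem_toFinset, mem_roots hfj1]
        exact ⟨by rw [fQ_succ]; exact hz0, hzIoo⟩
      exact Finset.mem_union_left _ this
    have hsub : t \ s ⊆ Rset Q (j + 1) := by
      intro z hz
      rcases Finset.mem_sdiff.1 hz with ⟨hz1, hz2⟩
      rcases Finset.mem_union.1 hz1 with h | h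
      · exact h
      · exact absurd h hz2
    calc j + 1 ≤ s.card - 1 := by omega
    _ ≤ (t \ s).card := by omega
    _ ≤ (Rset Q (j + 1)).card := Finset.card_le_card hsub

end GLAux

namespace GLAux

noncomputable def nodes (Q : ℕ) : Finset ℝ := (fQ Q Q).roots.toFinset

lemma nodes_card_aux (Q : ℕ) :
    (nodes Q).card = Q ∧ Rset Q Q = nodes Q ∧
      Multiset.card (fQ Q Q).roots = Q ∧ (fQ Q Q).roots.Nodup := by
  have h1 : Q ≤ (Rset Q Q).card := card_Rset Q Q le_rfl
  have h2 : Rset Q Q ⊆ nodes Q := Finset.filter_subset _ _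
  have h3 : (nodes Q).card ≤ Multiset.card (fQ Q Q).roots :=
    Multiset.toFinset_card_le _
  have h4 : Multiset.card (fQ Q Q).roots ≤ Q := by
    have := Polynomial.card_roots' (fQ Q Q)
    rwa [natDegree_fQ Q Q (by omega), show 2 * Q - Q = Q by omega] at this
  have h5 : (Rset Q Q).card ≤ (nodes Q).card := Finset.card_le_card h2
  have hcard : (nodes Q).card = Q := by omega
  have hcardroots : Multiset.card (fQ Q Q).roots = Q := by omega
  refine ⟨hcard, Finset.eq_of_subset_of_card_le h2 (by omega), hcardroots, ?_⟩
  rw [← Multiset.toFinset_card_eq_card_iff_nodup]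
  rw [hcardroots]; exact hcard

lemma card_nodes (Q : ℕ) : (nodes Q).card = Q := (nodes_card_aux Q).1

lemma nodes_subset_Ioo (Q : ℕ) : ↑(nodes Q) ⊆ Set.Ioo (-1 : ℝ) 1 := by
  intro x hx
  rw [← (nodes_card_aux Q).2.1] at hx
  exact (mem_Rset.1 hx).2

lemma roots_eq_nodes_val (Q : ℕ) : (fQ Q Q).roots = (nodes Q).val :=
  (Multiset.dedup_eq_self.mpr (nodes_card_aux Q).2.2.2).symm

lemma fQ_eq_prod (Q : ℕ) :
    fQ Q Q = C (fQ Q Q).leadingCoeff * ∏ c ∈ nodes Q, (X - C c) := by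
  have hsplit : Splits (fQ Q Q) := by
    rw [Polynomial.splits_iff_card_roots, natDegree_fQ Q Q (by omega),
      (nodes_card_aux Q).2.2.1]
    omega
  have h := hsplit.eq_prod_roots
  rw [roots_eq_nodes_val] at h
  rw [Finset.prod_eq_multiset_prod]
  exact h

lemma leadingCoeff_fQ_ne_zero (Q : ℕ) : (fQ Q Q).leadingCoeff ≠ 0 :=
  Polynomial.leadingCoeff_ne_zero.mpr (fQ_ne_zero Q Q (by omega))

lemma eval_node_root {Q : ℕ} {c : ℝ} (hc : c ∈ nodes Q) : (fQ Q Q).eval c = 0 := by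
  have : c ∈ (fQ Q Q).roots := Multiset.mem_toFinset.1 hc
  exact (Polynomial.mem_roots (fQ_ne_zero Q Q (by omega))).1 this

end GLAux

namespace GLAux

lemma intervalIntegrable_poly (p : ℝ[X]) (a b : ℝ) :
    IntervalIntegrable (fun x => p.eval x) MeasureTheory.volume a b :=
  p.continuous.intervalIntegrable a b

lemma ibp_step (Q m : ℕ) (hm : m < Q) (r : ℝ[X]) :
    ∫ x in (-1:ℝ)..1, (fQ Q (m + 1)).eval x * r.eval x =
      - ∫ x in (-1:ℝ)..1, (fQ Q m).eval x * (derivative r).eval x := by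
  have key := intervalIntegral.integral_deriv_mul_eq_sub
    (u := fun x => (fQ Q m).eval x) (v := fun x => r.eval x)
    (u' := fun x => (derivative (fQ Q m)).eval x)
    (v' := fun x => (derivative r).eval x)
    (a := (-1:ℝ)) (b := 1)
    (fun x _ => (fQ Q m).hasDerivAt x)
    (fun x _ => r.hasDerivAt x)
    ((derivative (fQ Q m)).continuous.intervalIntegrable _ _)
    ((derivative r).continuous.intervalIntegrable _ _)
  rw [eval_fQ_one Q m hm, eval_fQ_neg_one Q m hm, zero_mul, zero_mul, sub_zero] at key
  have hsplit := intervalIntegral.integral_add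
    (μ := MeasureTheory.volume) (a := (-1:ℝ)) (b := 1)
    (((derivative (fQ Q m)).continuous.mul r.continuous).intervalIntegrable _ _)
    (((fQ Q m).continuous.mul (derivative r).continuous).intervalIntegrable _ _)
  rw [show (fun x => eval x (derivative (fQ Q m)) * eval x r + eval x (fQ Q m) * eval x (derivative r)) = (fun x => (fun x => eval x (derivative (fQ Q m)) * eval x r) x + (fun x => eval x (fQ Q m) * eval x (derivative r)) x) from rfl] at key
  simp only [Pi.mul_apply] at hsplit key
  rw [hsplit] at key
  rw [fQ_succ]
  linarith

end GLAux

namespace GLAux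

lemma ibp_iter (Q : ℕ) : ∀ j ≤ Q, ∀ r : ℝ[X],
    ∫ x in (-1:ℝ)..1, (fQ Q Q).eval x * r.eval x =
      (-1 : ℝ) ^ j * ∫ x in (-1:ℝ)..1, (fQ Q (Q - j)).eval x * (derivative^[j] r).eval x := by
  intro j
  induction j with
  | zero => intro _ r; simp
  | succ j ih =>
    intro hj r
    have hj' : j ≤ Q := by omega
    rw [ih hj' r]
    have hQj : Q - j = (Q - (j + 1)) + 1 := by omega
    have hm : Q - (j + 1) < Q := by omega
    rw [hQj, ibp_step Q (Q - (j + 1)) hm (derivative^[j] r)]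
    rw [← Function.iterate_succ_apply' derivative j r]
    ring

lemma ortho (Q : ℕ) (r : ℝ[X]) (hr : r.natDegree < Q) :
    ∫ x in (-1:ℝ)..1, (fQ Q Q).eval x * r.eval x = 0 := by
  rw [ibp_iter Q Q le_rfl r]
  rw [Polynomial.iterate_derivative_eq_zero hr]
  simp

end GLAux

namespace GLAux

/-- Gauss–Legendre weight for node `c` on `[-1,1]`. -/
noncomputable def w (Q : ℕ) (c : ℝ) : ℝ :=
  ∫ y in (-1:ℝ)..1, (Lagrange.basis (nodes Q) id c).eval y

lemma injOn_id' (s : Set ℝ) : Set.InjOn (id : ℝ → ℝ) s := fun _ _ _ _ h => h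

lemma exact_low (Q : ℕ) (r : ℝ[X]) (hr : r.degree < (nodes Q).card) :
    ∫ x in (-1:ℝ)..1, r.eval x = ∑ c ∈ nodes Q, r.eval c * w Q c := by
  have h := Lagrange.eq_interpolate (v := (id : ℝ → ℝ)) (s := nodes Q)
    (injOn_id' _) hr
  conv_lhs => rw [h]
  rw [Lagrange.interpolate_apply]
  have hint : ∀ c ∈ nodes Q, IntervalIntegrable
      (fun x => (C (r.eval (id c)) * Lagrange.basis (nodes Q) id c).eval x)
      MeasureTheory.volume (-1:ℝ) 1 :=
    fun c _ => (Polynomial.continuous _).intervalIntegrable _ _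
  rw [show (fun x => eval x (∑ i ∈ nodes Q, C (eval (id i) r) * Lagrange.basis (nodes Q) id i))
      = fun x => ∑ i ∈ nodes Q, (C (eval (id i) r) * Lagrange.basis (nodes Q) id i).eval x from
    funext fun x => Polynomial.eval_finset_sum _ _ _]
  rw [intervalIntegral.integral_finset_sum hint]
  refine Finset.sum_congr rfl fun c _ => ?_
  simp only [eval_mul, eval_C, id]
  rw [intervalIntegral.integral_const_mul, w]

lemma exact_high (Q : ℕ) (hQ : 1 ≤ Q) (p : ℝ[X]) (hp : p.natDegree < 2 * Q) :
    ∑ c ∈ nodes Q, w Q c * p.eval c = ∫ x in (-1:ℝ)..1, p.eval x := by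
  set π : ℝ[X] := ∏ c ∈ nodes Q, (X - C c) with hπ
  have hmonic : π.Monic := monic_prod_of_monic _ _ fun c _ => monic_X_sub_C c
  have hdegπ : π.natDegree = Q := by
    rw [hπ, natDegree_prod _ _ fun c _ => X_sub_C_ne_zero c]
    simp [natDegree_X_sub_C, card_nodes]
  set d : ℝ[X] := p /ₘ π with hd
  set r : ℝ[X] := p %ₘ π with hr
  have hsplit : r + π * d = p := Polynomial.modByMonic_add_div p π
  have hdegr : r.degree < (nodes Q).card := by
    rw [card_nodes]
    have := Polynomial.degree_modByMonic_lt p hmonic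
    calc r.degree < π.degree := this
    _ ≤ Q := by rw [Polynomial.degree_eq_natDegree hmonic.ne_zero, hdegπ]
  have hdegd : d.natDegree < Q := by
    rw [hd, Polynomial.natDegree_divByMonic p hmonic, hdegπ]
    omega
  have hortho : ∫ x in (-1:ℝ)..1, (π * d).eval x = 0 := by
    have hev : ∀ x : ℝ, (fQ Q Q).eval x = (fQ Q Q).leadingCoeff * π.eval x := by
      intro x
      conv_lhs => rw [fQ_eq_prod Q]
      simp [eval_mul, eval_C, hπ]
    have : ∀ x : ℝ, (π * d).eval x =
        ((fQ Q Q).leadingCoeff)⁻¹ * ((fQ Q Q).eval x * d.eval x) := by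
      intro x
      rw [eval_mul, hev x]
      field_simp [leadingCoeff_fQ_ne_zero Q]
    simp_rw [this]
    rw [intervalIntegral.integral_const_mul, ortho Q d hdegd, mul_zero]
  have hpeval : ∀ c ∈ nodes Q, p.eval c = r.eval c := by
    intro c hc
    have hπc : π.eval c = 0 := by
      rw [hπ, eval_prod]
      exact Finset.prod_eq_zero hc (by simp)
    rw [← hsplit]; simp [eval_add, eval_mul, hπc]
  calc ∑ c ∈ nodes Q, w Q c * p.eval c = ∑ c ∈ nodes Q, r.eval c * w Q c := by
        refine Finset.sum_congr rfl fun c hc => ?_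
        rw [hpeval c hc]; ring
  _ = ∫ x in (-1:ℝ)..1, r.eval x := (exact_low Q r hdegr).symm
  _ = ∫ x in (-1:ℝ)..1, p.eval x := by
        rw [← hsplit]
        rw [show (fun x => eval x (r + π * d)) = fun x => eval x r + eval x (π * d) from
          funext fun x => by simp [eval_add]]
        rw [intervalIntegral.integral_add ((Polynomial.continuous _).intervalIntegrable _ _)
          ((Polynomial.continuous _).intervalIntegrable _ _), hortho, add_zero]

end GLAux

namespace GLAux

lemma iteratedDeriv_eval (p : ℝ[X]) (n : ℕ) :
    iteratedDeriv n (fun x => p.eval x) = fun x => (derivative^[n] p).eval x := by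
  induction n with
  | zero => simp
  | succ n ih =>
    rw [iteratedDeriv_succ, ih, Function.iterate_succ_apply']
    funext x
    exact Polynomial.deriv _

lemma legendreP_eq (n : ℕ) (x : ℝ) :
    legendreP n x = (1 / (2 ^ n * (n.factorial : ℝ))) * (fQ n n).eval x := by
  rw [legendreP]
  congr 1
  have h : (fun y : ℝ => (y ^ 2 - 1) ^ n) = fun y => (PQ n).eval y := by
    funext y; simp [PQ]
  rw [h, iteratedDeriv_eval]
  rfl

lemma legendreP_eq_zero_iff (n : ℕ) (x : ℝ) :
    legendreP n x = 0 ↔ (fQ n n).eval x = 0 := by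
  rw [legendreP_eq]
  have h : (1 / (2 ^ n * (n.factorial : ℝ))) ≠ 0 := by positivity
  simp [h, Nat.factorial_ne_zero]

lemma legRoots_eq (Q : ℕ) : legRoots Q = ↑(nodes Q) := by
  ext c
  constructor
  · rintro ⟨hIcc, hroot⟩
    rw [legendreP_eq_zero_iff] at hroot
    rw [Finset.mem_coe, nodes, Multiset.mem_toFinset,
      Polynomial.mem_roots (fQ_ne_zero Q Q (by omega))]
    exact hroot
  · intro hc
    refine ⟨Set.Ioo_subset_Icc_self (nodes_subset_Ioo Q hc), ?_⟩
    rw [legendreP_eq_zero_iff]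
    have : c ∈ (fQ Q Q).roots := Multiset.mem_toFinset.1 hc
    exact (Polynomial.mem_roots (fQ_ne_zero Q Q (by omega))).1 this

/-- the affine node map from `[-1,1]` to `[a,b]`. -/
noncomputable def nodeMap (a b c : ℝ) : ℝ := ((b - a) * c + (a + b)) / 2

lemma nodeMap_scaled {a b t : ℝ} (hab : a < b) :
    nodeMap a b ((2 * t - (a + b)) / (b - a)) = t := by
  have h : b - a ≠ 0 := by linarith
  simp only [nodeMap]
  field_simp
  try ring

lemma scaled_nodeMap {a b c : ℝ} (hab : a < b) :
    (2 * nodeMap a b c - (a + b)) / (b - a) = c := by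
  have h : b - a ≠ 0 := by linarith
  simp only [nodeMap]
  field_simp
  try ring


noncomputable def nodesAB (Q : ℕ) (a b : ℝ) : Finset ℝ := (nodes Q).image (nodeMap a b)

lemma glWeight_ne_zero_imp {Q : ℕ} {a b t : ℝ} (h : glWeight Q a b t ≠ 0) :
    a < b ∧ t ∈ nodesAB Q a b := by
  rw [glWeight] at h
  split_ifs at h with hcond
  · obtain ⟨hab, hmem⟩ := hcond
    refine ⟨hab, ?_⟩
    rw [legRoots_eq] at hmem
    rw [nodesAB, Finset.mem_image]
    exact ⟨_, hmem, nodeMap_scaled hab⟩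
  · exact absurd rfl h

lemma glWeight_node {Q : ℕ} {a b : ℝ} (hab : a < b) {c : ℝ} (hc : c ∈ nodes Q) :
    glWeight Q a b (nodeMap a b c) = ((b - a) / 2) * w Q c := by
  have hba : b - a ≠ 0 := by linarith
  have hsc := scaled_nodeMap (a := a) (b := b) (c := c) hab
  rw [glWeight, if_pos (by rw [hsc, legRoots_eq]; exact ⟨hab, hc⟩)]
  rw [hsc]
  have hset : legRoots Q \ {c} = ↑((nodes Q).erase c) := by
    rw [legRoots_eq, Finset.coe_erase]
  -- rewrite integrand
  have hint : ∀ x : ℝ,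
      (∏ᶠ c' ∈ legRoots Q \ {c},
        (2 * x - (b - a) * c' - (a + b)) / (2 * nodeMap a b c - (b - a) * c' - (a + b)))
      = (Lagrange.basis (nodes Q) id c).eval ((2 * x - (a + b)) / (b - a)) := by
    intro x
    rw [hset, finprod_mem_coe_finset, Lagrange.basis, Polynomial.eval_prod]
    refine Finset.prod_congr rfl fun c' _ => ?_
    rw [Lagrange.basisDivisor, eval_mul, eval_C, eval_sub, eval_C, eval_X, id, id]
    set y : ℝ := (2 * x - (a + b)) / (b - a) with hy
    have hnum : 2 * x - (b - a) * c' - (a + b) = (b - a) * (y - c') := by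
      rw [hy]; field_simp; ring
    have hden : 2 * nodeMap a b c - (b - a) * c' - (a + b) = (b - a) * (c - c') := by
      rw [nodeMap]; field_simp; ring
    rw [hnum, hden, mul_div_mul_left _ _ hba]
    rw [div_eq_inv_mul]
  simp_rw [hint]
  -- change of variables
  have he : (2 / (b - a)) ≠ 0 := by positivity
  have hcomp : ∀ x : ℝ, ((2 * x - (a + b)) / (b - a)) =
      (2 / (b - a)) * x + (-(a + b) / (b - a)) := by
    intro x; field_simp; ring
  simp_rw [hcomp]
  rw [intervalIntegral.integral_comp_mul_add
    (f := fun y => (Lagrange.basis (nodes Q) id c).eval y) he (-(a + b) / (b - a))]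
  have h1 : 2 / (b - a) * a + -(a + b) / (b - a) = -1 := by field_simp; ring
  have h2 : 2 / (b - a) * b + -(a + b) / (b - a) = 1 := by field_simp; ring
  rw [h1, h2, w, smul_eq_mul]
  congr 1
  rw [inv_div]
  try ring

end GLAux

namespace GLAux

lemma nodesAB_subset_Ioo (Q : ℕ) {a b : ℝ} (hab : a < b) :
    ↑(nodesAB Q a b) ⊆ Set.Ioo a b := by
  intro t ht
  simp only [nodesAB, Finset.coe_image] at ht
  obtain ⟨c, hc, rfl⟩ := ht
  obtain ⟨hc1, hc2⟩ := nodes_subset_Ioo Q hc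
  constructor
  · rw [nodeMap]; nlinarith
  · rw [nodeMap]; nlinarith

lemma glWeight_eq_zero {Q : ℕ} {a b t : ℝ} (h : t ∉ nodesAB Q a b) :
    glWeight Q a b t = 0 := by
  by_contra hne
  exact h (glWeight_ne_zero_imp hne).2

lemma quad_ab (Q : ℕ) (hQ : 1 ≤ Q) {a b : ℝ} (hab : a < b) (p : ℝ[X])
    (hp : p.natDegree < 2 * Q) :
    ∑ t ∈ nodesAB Q a b, glWeight Q a b t * p.eval t = ∫ x in a..b, p.eval x := by
  have hba : b - a ≠ 0 := by linarith
  have hinj : Set.InjOn (nodeMap a b) ↑(nodes Q) := by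
    intro c1 _ c2 _ h
    rw [nodeMap, nodeMap, div_eq_div_iff two_ne_zero two_ne_zero] at h
    have := mul_left_cancel₀ hba (by linarith : (b - a) * c1 = (b - a) * c2)
    exact this
  rw [nodesAB, Finset.sum_image (fun c1 h1 c2 h2 h => hinj h1 h2 h)]
  set r : ℝ[X] := C ((b - a) / 2) * X + C ((a + b) / 2) with hr
  set q : ℝ[X] := p.comp r with hq
  have hqeval : ∀ c : ℝ, q.eval c = p.eval (nodeMap a b c) := by
    intro c
    rw [hq, Polynomial.eval_comp, hr]
    congr 1
    simp [nodeMap]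
    try ring
  have hqdeg : q.natDegree < 2 * Q := by
    have hrdeg : r.natDegree ≤ 1 := by
      calc r.natDegree ≤ max (C ((b - a) / 2) * X).natDegree (C ((a + b) / 2)).natDegree :=
            Polynomial.natDegree_add_le _ _
      _ ≤ 1 := by
          apply max_le
          · exact (Polynomial.natDegree_C_mul_le _ _).trans (by rw [Polynomial.natDegree_X])
          · simp
    calc q.natDegree ≤ p.natDegree * r.natDegree := Polynomial.natDegree_comp_le
    _ ≤ p.natDegree * 1 := Nat.mul_le_mul_left _ hrdeg
    _ < 2 * Q := by omega
  have hsum : ∑ c ∈ nodes Q, glWeight Q a b (nodeMap a b c) * p.eval (nodeMap a b c)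
      = ((b - a) / 2) * ∑ c ∈ nodes Q, w Q c * q.eval c := by
    rw [Finset.mul_sum]
    refine Finset.sum_congr rfl fun c hc => ?_
    rw [glWeight_node hab hc, hqeval]
    ring
  rw [hsum, exact_high Q hQ q hqdeg]
  have hcv : ∫ y in (-1:ℝ)..1, q.eval y
      = ((b - a) / 2)⁻¹ • ∫ x in a..b, p.eval x := by
    have he : ((b - a) / 2 : ℝ) ≠ 0 := by positivity
    have : ∀ y : ℝ, q.eval y = p.eval ((b - a) / 2 * y + (a + b) / 2) := by
      intro y; rw [hqeval]; congr 1; rw [nodeMap]; field_simp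
      try ring
    simp_rw [this]
    rw [intervalIntegral.integral_comp_mul_add (f := fun x => p.eval x) he ((a + b) / 2)]
    have h1 : (b - a) / 2 * (-1) + (a + b) / 2 = a := by ring
    have h2 : (b - a) / 2 * 1 + (a + b) / 2 = b := by ring
    rw [h1, h2]
  rw [hcv, smul_eq_mul, ← mul_assoc, mul_inv_cancel₀ (by positivity : ((b-a)/2 : ℝ) ≠ 0), one_mul]

lemma finsum_mem_eq_finset_sum (f : ℝ → ℝ) (s : Set ℝ) (A : Finset ℝ)
    (h1 : ∀ x ∈ s, f x ≠ 0 → x ∈ A) (h2 : ∀ x ∈ A, x ∉ s → f x = 0) :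
    ∑ᶠ x ∈ s, f x = ∑ x ∈ A, f x := by
  rw [finsum_mem_def]
  rw [finsum_eq_sum_of_support_subset _ (s := A) (by
    intro x hx
    rw [Function.mem_support] at hx
    have hxs : x ∈ s := by
      by_contra hxs
      rw [Set.indicator_of_notMem hxs] at hx
      exact hx rfl
    rw [Set.indicator_of_mem hxs] at hx
    exact h1 x hxs hx)]
  refine Finset.sum_congr rfl fun x hx => ?_
  by_cases hxs : x ∈ s
  · rw [Set.indicator_of_mem hxs]
  · rw [Set.indicator_of_notMem hxs, h2 x hx hxs]

end GLAux

namespace GLAux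

/-- the polynomial `t ↦ (T - t)^k / k!`. -/
noncomputable def pk (T : ℝ) (k : ℕ) : ℝ[X] :=
  C (1 / (k.factorial : ℝ)) * (C T - X) ^ k

lemma pk_eval (T : ℝ) (k : ℕ) (t : ℝ) :
    (pk T k).eval t = (T - t) ^ k / (k.factorial : ℝ) := by
  simp [pk, eval_mul, eval_pow, eval_sub, eval_C, eval_X]
  ring

lemma pk_natDegree_le (T : ℝ) (k : ℕ) : (pk T k).natDegree ≤ k := by
  calc (pk T k).natDegree ≤ ((C T - X : ℝ[X]) ^ k).natDegree :=
        Polynomial.natDegree_C_mul_le _ _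
  _ ≤ k * (C T - X : ℝ[X]).natDegree := Polynomial.natDegree_pow_le
  _ ≤ k * 1 := by
      apply Nat.mul_le_mul_left
      calc (C T - X : ℝ[X]).natDegree ≤ max (C T).natDegree (X : ℝ[X]).natDegree :=
            Polynomial.natDegree_sub_le _ _
      _ ≤ 1 := by simp [Polynomial.natDegree_X]
  _ = k := Nat.mul_one k

lemma pk_integral (T : ℝ) (k : ℕ) (s : ℝ) :
    ∫ t in s..T, (pk T k).eval t = (T - s) ^ (k + 1) / ((k + 1).factorial : ℝ) := by
  simp_rw [pk_eval]
  have h1 : ∀ t : ℝ, (T - t) ^ k / (k.factorial : ℝ)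
      = (1 / (k.factorial : ℝ)) * ((fun x => x ^ k) (T - t)) := by
    intro t; simp; ring
  simp_rw [h1]
  rw [intervalIntegral.integral_const_mul]
  rw [intervalIntegral.integral_comp_sub_left (fun x => x ^ k) T]
  rw [integral_pow, sub_self]
  rw [Nat.factorial_succ]
  push_cast
  have hk : (k.factorial : ℝ) ≠ 0 := Nat.cast_ne_zero.mpr k.factorial_ne_zero
  have hk1 : ((k : ℝ) + 1) ≠ 0 := by positivity
  field_simp
  try ring
  try exact Or.inl trivial

/-- Finsets containing the support of `qbar`. -/
noncomputable def SF (T : ℝ) (Q : ℕ) : ℕ → Finset ℝ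
  | 0 => {0}
  | n + 1 => (SF T Q n).biUnion (fun s => nodesAB Q s T)

lemma SF_subset (T : ℝ) (hT : 0 < T) (Q : ℕ) :
    ∀ n, ↑(SF T Q n) ⊆ Set.Ico (0 : ℝ) T := by
  intro n
  induction n with
  | zero =>
    intro x hx
    simp only [SF, Finset.coe_singleton, Set.mem_singleton_iff] at hx
    rw [hx]; exact ⟨le_refl 0, hT⟩
  | succ n ih =>
    intro t ht
    simp only [SF, Finset.coe_biUnion, Set.mem_iUnion] at ht
    obtain ⟨s, hs, hts⟩ := ht
    have hsI : s ∈ Set.Ico (0:ℝ) T := ih hs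
    have := nodesAB_subset_Ioo Q hsI.2 hts
    exact ⟨le_of_lt (lt_of_le_of_lt hsI.1 this.1), this.2⟩

lemma qbar_support (T : ℝ) (hT : 0 < T) (Q : ℕ) :
    ∀ n t, qbar T Q n t ≠ 0 → t ∈ SF T Q n := by
  intro n
  induction n with
  | zero =>
    intro t ht
    simp only [qbar] at ht
    split_ifs at ht with h
    · rw [h]; simp [SF]
    · exact absurd rfl ht
  | succ n ih =>
    intro t ht
    simp only [qbar] at ht
    -- some term is nonzero
    by_contra htS
    apply ht
    have hzero : ∀ s ∈ Set.Icc (0:ℝ) t, qbar T Q n s * glWeight Q s T t = 0 := by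
      intro s hs
      by_cases hq : qbar T Q n s = 0
      · rw [hq, zero_mul]
      · have hsS := ih s hq
        by_cases hg : glWeight Q s T t = 0
        · rw [hg, mul_zero]
        · exfalso
          apply htS
          have : t ∈ nodesAB Q s T := by
            by_contra hn; exact hg (glWeight_eq_zero hn)
          simp only [SF, Finset.mem_biUnion]
          exact ⟨s, hsS, this⟩
    rw [finsum_mem_eq_finset_sum _ _ ∅ (fun x hx hne => absurd (hzero x hx) hne)
      (fun x hx => absurd hx (Finset.notMem_empty x))]
    simp

lemma qbar_succ_eq_sum (T : ℝ) (hT : 0 < T) (Q : ℕ) (n : ℕ) (t : ℝ) :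
    qbar T Q (n + 1) t = ∑ s ∈ SF T Q n, qbar T Q n s * glWeight Q s T t := by
  simp only [qbar]
  apply finsum_mem_eq_finset_sum
  · intro s _ hne
    apply qbar_support T hT Q n
    intro h; rw [h, zero_mul] at hne; exact hne rfl
  · intro s hsS hsnot
    have hsI := SF_subset T hT Q n hsS
    have hst : t < s := by
      by_contra h
      exact hsnot ⟨hsI.1, le_of_not_gt h⟩
    have : t ∉ nodesAB Q s T := by
      intro hmem
      have := nodesAB_subset_Ioo Q hsI.2 hmem
      linarith [this.1]
    rw [glWeight_eq_zero this, mul_zero]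

theorem main (T : ℝ) (hT : 0 < T) (Q : ℕ) (hQ : 1 ≤ Q) :
    ∀ n k : ℕ, n + k < 2 * Q →
    ∑ᶠ t ∈ Set.Icc (0 : ℝ) T, qbar T Q n t * ((T - t) ^ k / (k.factorial : ℝ))
      = T ^ (n + k) / ((n + k).factorial : ℝ) := by
  intro n
  induction n with
  | zero =>
    intro k hk
    rw [finsum_mem_eq_finset_sum _ _ {0}
      (fun x _ hne => by
        simp only [Finset.mem_singleton]
        by_contra hx
        simp only [qbar, if_neg hx, zero_mul] at hne
        exact hne rfl)
      (fun x hx hxn => absurd (by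
        rw [Finset.mem_singleton] at hx
        rw [hx]; exact ⟨le_refl 0, le_of_lt hT⟩) hxn)]
    simp only [Finset.sum_singleton, qbar]
    norm_num
  | succ n ih =>
    intro k hk
    have hstep : ∑ᶠ t ∈ Set.Icc (0 : ℝ) T,
        qbar T Q (n+1) t * ((T - t) ^ k / (k.factorial : ℝ))
        = ∑ t ∈ SF T Q (n+1), qbar T Q (n+1) t * ((T - t) ^ k / (k.factorial : ℝ)) := by
      apply finsum_mem_eq_finset_sum
      · intro t _ hne
        apply qbar_support T hT Q (n+1)
        intro h; rw [h, zero_mul] at hne; exact hne rfl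
      · intro t htS htn
        exfalso
        exact htn (Set.Ico_subset_Icc_self (SF_subset T hT Q (n+1) htS))
    rw [hstep]
    have hswap : ∑ t ∈ SF T Q (n+1), qbar T Q (n+1) t * ((T - t) ^ k / (k.factorial : ℝ))
        = ∑ s ∈ SF T Q n, qbar T Q n s *
            (∑ t ∈ SF T Q (n+1), glWeight Q s T t * ((T - t) ^ k / (k.factorial : ℝ))) := by
      calc ∑ t ∈ SF T Q (n+1), qbar T Q (n+1) t * ((T - t) ^ k / (k.factorial : ℝ))
          = ∑ t ∈ SF T Q (n+1), ∑ s ∈ SF T Q n,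
              qbar T Q n s * (glWeight Q s T t * ((T - t) ^ k / (k.factorial : ℝ))) := by
            refine Finset.sum_congr rfl fun t _ => ?_
            rw [qbar_succ_eq_sum T hT Q n t, Finset.sum_mul]
            exact Finset.sum_congr rfl fun s _ => by ring
      _ = ∑ s ∈ SF T Q n, ∑ t ∈ SF T Q (n+1),
              qbar T Q n s * (glWeight Q s T t * ((T - t) ^ k / (k.factorial : ℝ))) :=
            Finset.sum_comm
      _ = ∑ s ∈ SF T Q n, qbar T Q n s *
            (∑ t ∈ SF T Q (n+1), glWeight Q s T t * ((T - t) ^ k / (k.factorial : ℝ))) := by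
            refine Finset.sum_congr rfl fun s _ => ?_
            rw [Finset.mul_sum]
    rw [hswap]
    have hinner : ∀ s ∈ SF T Q n,
        (∑ t ∈ SF T Q (n+1), glWeight Q s T t * ((T - t) ^ k / (k.factorial : ℝ)))
          = (T - s) ^ (k + 1) / ((k + 1).factorial : ℝ) := by
      intro s hs
      have hsI := SF_subset T hT Q n hs
      have hsub : nodesAB Q s T ⊆ SF T Q (n+1) := by
        intro t ht
        simp only [SF, Finset.mem_biUnion]
        exact ⟨s, hs, ht⟩
      rw [← Finset.sum_subset hsub (fun t _ htn => by rw [glWeight_eq_zero htn, zero_mul])]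
      have hdeg : (pk T k).natDegree < 2 * Q :=
        lt_of_le_of_lt (pk_natDegree_le T k) (by omega)
      calc ∑ t ∈ nodesAB Q s T, glWeight Q s T t * ((T - t) ^ k / (k.factorial : ℝ))
          = ∑ t ∈ nodesAB Q s T, glWeight Q s T t * (pk T k).eval t :=
            Finset.sum_congr rfl fun t _ => by rw [pk_eval]
      _ = ∫ x in s..T, (pk T k).eval x := quad_ab Q hQ hsI.2 (pk T k) hdeg
      _ = (T - s) ^ (k + 1) / ((k + 1).factorial : ℝ) := pk_integral T k s
    rw [Finset.sum_congr rfl fun s hs => by rw [hinner s hs]]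
    have hback : ∑ s ∈ SF T Q n, qbar T Q n s * ((T - s) ^ (k+1) / ((k+1).factorial : ℝ))
        = ∑ᶠ s ∈ Set.Icc (0 : ℝ) T, qbar T Q n s * ((T - s) ^ (k+1) / ((k+1).factorial : ℝ)) := by
      symm
      apply finsum_mem_eq_finset_sum
      · intro s _ hne
        apply qbar_support T hT Q n
        intro h; rw [h, zero_mul] at hne; exact hne rfl
      · intro s hsS hsn
        exact absurd (Set.Ico_subset_Icc_self (SF_subset T hT Q n hsS)) hsn
    rw [hback, ih (k+1) (by omega)]
    rw [show n + (k + 1) = n + 1 + k from by omega]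
  
end GLAux


end GLAuxSection

theorem stmt2 (T : ℝ) (hT : 0 < T) (Q : ℕ) (hQ : 1 ≤ Q)
    (n k : ℕ) (hk : n + k < 2 * Q) :
    ∑ᶠ t ∈ Set.Icc (0 : ℝ) T, qbar T Q n t * ((T - t) ^ k / (k.factorial : ℝ))
      = T ^ (n + k) / ((n + k).factorial : ℝ) :=
  GLAux.main T hT Q hQ n k hk
end

section
/- Let Q ∈ ℕ and k ∈ ℕ_0 with k ≤ 2Q − 1. Then ‖1‖_{k,Q} = T^k / k!, where 1 denotes the constant random field [0,T]×ℝ^d×Ω ∋ (s,x,ω) ↦ 1 ∈ ℝ. -/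
open MeasureTheory ProbabilityTheory ENNReal

noncomputable section GLAux
open Polynomial intervalIntegral


def Fn (n : ℕ) : ℝ[X] := (X ^ 2 - C 1) ^ n

def Lpoly (n : ℕ) : ℝ[X] :=
  C (1 / (2 ^ n * (n.factorial : ℝ))) * derivative^[n] (Fn n)

lemma Fn_monic (n : ℕ) : (Fn n).Monic :=
  (monic_X_pow_sub_C (1:ℝ) two_ne_zero).pow n

lemma Fn_natDegree (n : ℕ) : (Fn n).natDegree = 2 * n := by
  rw [Fn, natDegree_pow, natDegree_X_pow_sub_C, mul_comm]

lemma iteratedDeriv_polyEval (p : ℝ[X]) (k : ℕ) :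
    iteratedDeriv k (fun x => p.eval x) = fun x => (derivative^[k] p).eval x := by
  induction k with
  | zero => simp
  | succ k ih =>
    rw [iteratedDeriv_succ, ih, Function.iterate_succ_apply']
    funext x
    exact Polynomial.deriv _

lemma legendreP_eq_eval (n : ℕ) (x : ℝ) : legendreP n x = (Lpoly n).eval x := by
  have : (fun y : ℝ => (y ^ 2 - 1) ^ n) = fun y => (Fn n).eval y := by
    funext y; simp [Fn]
  rw [legendreP, this, iteratedDeriv_polyEval, Lpoly, eval_mul, eval_C]

lemma Fn_iter_deriv_factor (n : ℕ) : ∀ j, j ≤ n →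
    ∃ g : ℝ[X], derivative^[j] (Fn n) = (X ^ 2 - C 1) ^ (n - j) * g := by
  intro j
  induction j with
  | zero => intro _; exact ⟨1, by simp [Fn]⟩
  | succ j ih =>
    intro hj
    obtain ⟨g, hg⟩ := ih (le_of_lt (Nat.lt_of_succ_le hj))
    set m := n - (j + 1) with hm
    have hnj : n - j = m + 1 := by omega
    refine ⟨C ((m + 1 : ℕ) : ℝ) * derivative (X ^ 2 - C 1) * g + (X ^ 2 - C 1) * derivative g, ?_⟩
    rw [Function.iterate_succ_apply', hg, hnj, derivative_mul, derivative_pow]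
    push_cast
    ring

lemma Fn_iter_deriv_eval_one (n j : ℕ) (hj : j < n) :
    (derivative^[j] (Fn n)).eval 1 = 0 ∧ (derivative^[j] (Fn n)).eval (-1) = 0 := by
  obtain ⟨g, hg⟩ := Fn_iter_deriv_factor n j hj.le
  have hnj : n - j ≠ 0 := by omega
  constructor <;> rw [hg] <;> simp [zero_pow hnj]

lemma ibp_poly (f g : ℝ[X]) (a b : ℝ) :
    ∫ x in a..b, (derivative f).eval x * g.eval x
      = f.eval b * g.eval b - f.eval a * g.eval a
        - ∫ x in a..b, f.eval x * (derivative g).eval x := by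
  have h := intervalIntegral.integral_deriv_mul_eq_sub
    (u := fun x => f.eval x) (v := fun x => g.eval x)
    (u' := fun x => (derivative f).eval x) (v' := fun x => (derivative g).eval x)
    (fun x _ => f.hasDerivAt x) (fun x _ => g.hasDerivAt x)
    (((derivative f).continuous).intervalIntegrable a b)
    (((derivative g).continuous).intervalIntegrable a b)
  rw [intervalIntegral.integral_add (f := fun x => (derivative f).eval x * g.eval x)
    (g := fun x => f.eval x * (derivative g).eval x)
    (((derivative f).continuous.mul g.continuous).intervalIntegrable a b)
    ((f.continuous.mul (derivative g).continuous).intervalIntegrable a b)] at h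
  linarith

lemma ortho_aux (n : ℕ) : ∀ j, j ≤ n → ∀ r : ℝ[X],
    ∫ x in (-1:ℝ)..1, (derivative^[n] (Fn n)).eval x * r.eval x
      = (-1:ℝ)^j * ∫ x in (-1:ℝ)..1,
          (derivative^[n-j] (Fn n)).eval x * (derivative^[j] r).eval x := by
  intro j
  induction j with
  | zero => intro _ r; simp
  | succ j ih =>
    intro hj r
    rw [ih (le_of_lt (Nat.lt_of_succ_le hj)) r]
    have hnj : n - j = (n - (j+1)) + 1 := by omega
    have hD : derivative^[n-j] (Fn n) = derivative (derivative^[n-(j+1)] (Fn n)) := by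
      rw [hnj, Function.iterate_succ_apply']
    rw [hD, ibp_poly]
    obtain ⟨h1, h2⟩ := Fn_iter_deriv_eval_one n (n - (j+1)) (by omega)
    rw [h1, h2, Function.iterate_succ_apply']
    ring

lemma ortho (n : ℕ) (r : ℝ[X]) (hr : r.natDegree < n) :
    ∫ x in (-1:ℝ)..1, (Lpoly n).eval x * r.eval x = 0 := by
  have h := ortho_aux n n le_rfl r
  rw [Nat.sub_self, iterate_derivative_eq_zero hr] at h
  simp only [Function.iterate_zero_apply, eval_zero, mul_zero,
    intervalIntegral.integral_zero, mul_zero] at h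
  have : ∀ x : ℝ, (Lpoly n).eval x * r.eval x
      = (1 / (2 ^ n * (n.factorial : ℝ))) * ((derivative^[n] (Fn n)).eval x * r.eval x) := by
    intro x; rw [Lpoly, eval_mul, eval_C]; ring
  simp_rw [this]
  rw [intervalIntegral.integral_const_mul, h, mul_zero]

lemma Lpoly_ne_zero (n : ℕ) : Lpoly n ≠ 0 := by
  have hco : (derivative^[n] (Fn n)).coeff n ≠ 0 := by
    rw [coeff_iterate_derivative]
    have h2n : n + n = (Fn n).natDegree := by rw [Fn_natDegree]; omega
    rw [h2n, (Fn_monic n).coeff_natDegree]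
    simp only [nsmul_eq_mul, mul_one]
    have hne : ((Fn n).natDegree).descFactorial n ≠ 0 := by
      simp only [ne_eq, Nat.descFactorial_eq_zero_iff_lt, Fn_natDegree]; omega
    exact_mod_cast hne
  intro h
  rw [Lpoly] at h
  rcases mul_eq_zero.1 h with h' | h'
  · exact (by positivity : (0:ℝ) < 1 / (2 ^ n * (n.factorial : ℝ))).ne'
      (by simpa using congrArg (eval 0) h')
  · exact hco (by rw [h']; simp)

lemma Lpoly_natDegree_le (n : ℕ) : (Lpoly n).natDegree ≤ n := by
  refine (natDegree_mul_le).trans ?_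
  simp only [natDegree_C, zero_add]
  have := natDegree_iterate_derivative (Fn n) n
  rw [Fn_natDegree] at this; omega


lemma poly_integral_pos {p : ℝ[X]} (hp : p ≠ 0) {a b : ℝ} (hab : a < b)
    (hnn : ∀ x ∈ Set.Ioo a b, 0 ≤ p.eval x) : 0 < ∫ x in a..b, p.eval x := by
  have hae : 0 ≤ᵐ[MeasureTheory.volume.restrict (Set.uIoc a b)] fun x => p.eval x := by
    rw [Set.uIoc_of_le hab.le]
    show ∀ᵐ x ∂(MeasureTheory.volume.restrict (Set.Ioc a b)), 0 ≤ p.eval x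
    rw [MeasureTheory.ae_restrict_iff' measurableSet_Ioc, MeasureTheory.ae_iff]
    refine MeasureTheory.measure_mono_null (fun x hx => ?_) (MeasureTheory.measure_singleton b)
    simp only [Set.mem_setOf_eq, not_forall] at hx
    obtain ⟨hx1, hx2⟩ := hx
    by_contra hxb
    exact hx2 (hnn x ⟨hx1.1, lt_of_le_of_ne hx1.2 (by simpa using hxb)⟩)
  rw [intervalIntegral.integral_pos_iff_support_of_nonneg_ae' hae
    (p.continuous.intervalIntegrable a b)]
  refine ⟨hab, ?_⟩
  have hroots : ({ x : ℝ | p.IsRoot x }).Finite := Polynomial.finite_setOf_isRoot hp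
  have hsub : Set.Ioc a b \ {x : ℝ | p.IsRoot x}
      ⊆ (Function.support fun x => p.eval x) ∩ Set.Ioc a b :=
    fun x hx => ⟨hx.2, hx.1⟩
  calc (0:ENNReal) < MeasureTheory.volume (Set.Ioc a b \ {x : ℝ | p.IsRoot x}) := by
        rw [MeasureTheory.measure_diff_null (hroots.measure_zero _), Real.volume_Ioc]
        exact ENNReal.ofReal_pos.2 (sub_pos.2 hab)
    _ ≤ _ := MeasureTheory.measure_mono hsub

lemma sign_const_of_no_root {h : ℝ[X]} (hne : h ≠ 0) (hr : h.roots = 0) :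
    (∀ y : ℝ, 0 < h.eval y) ∨ (∀ y : ℝ, h.eval y < 0) := by
  have hnz : ∀ y : ℝ, h.eval y ≠ 0 := by
    intro y hy
    have : y ∈ h.roots := by rw [mem_roots hne]; exact hy
    simp [hr] at this
  by_contra hc
  push_neg at hc
  obtain ⟨⟨y₁, hy₁⟩, ⟨y₂, hy₂⟩⟩ := hc
  have h0 : (0:ℝ) ∈ Set.uIcc (h.eval y₁) (h.eval y₂) := Set.mem_uIcc.2 (Or.inl ⟨hy₁, hy₂⟩)
  obtain ⟨z, _, hz⟩ := intermediate_value_uIcc (a := y₁) (b := y₂)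
    (f := fun y => h.eval y) h.continuous.continuousOn h0
  exact hnz z hz

open Classical in
lemma exists_rootsF (n : ℕ) (hn : 1 ≤ n) : ∃ s : Finset ℝ,
    s.card = n ∧ ↑s ⊆ Set.Ioo (-1:ℝ) 1 ∧
    (∀ x : ℝ, (Lpoly n).eval x = 0 ↔ x ∈ s) ∧
    ∃ c : ℝ, c ≠ 0 ∧ Lpoly n = C c * (Lagrange.nodal s id) := by
  set p := Lpoly n with hpdef
  have hp : p ≠ 0 := Lpoly_ne_zero n
  obtain ⟨h, hfac, hcard, hroots0⟩ := exists_prod_multiset_X_sub_C_mul p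
  have hhne : h ≠ 0 := by
    intro h0; rw [h0, mul_zero] at hfac; exact hp hfac.symm
  set R := p.roots with hR
  set tF := R.toFinset with htF
  set sOdd := tF.filter (fun x => x ∈ Set.Ioo (-1:ℝ) 1 ∧ Odd (R.count x)) with hsOdd
  set q := Lagrange.nodal sOdd id with hq
  set e : ℝ → ℕ := fun x => R.count x + (if x ∈ sOdd then 1 else 0) with he
  have hPiEval : ∀ y : ℝ, ((R.map fun a => X - C a).prod).eval y
      = ∏ x ∈ tF, (y - x) ^ (R.count x) := by
    intro y
    rw [hR, Polynomial.prod_multiset_root_eq_finset_root, eval_prod]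
    refine Finset.prod_congr rfl fun x hx => ?_
    rw [eval_pow, eval_sub, eval_X, eval_C, Polynomial.count_roots]
  have hqEval : ∀ y : ℝ, q.eval y = ∏ x ∈ tF, (y - x) ^ (if x ∈ sOdd then 1 else 0) := by
    intro y
    have h1 : ∀ x ∈ sOdd, y - id x = (y - x) ^ (if x ∈ sOdd then 1 else 0) := fun x hx => by
      rw [if_pos hx, pow_one, id_eq]
    rw [hq, Lagrange.eval_nodal, Finset.prod_congr rfl h1]
    exact Finset.prod_subset (Finset.filter_subset _ _)
      (fun x _ hnx => by rw [if_neg hnx, pow_zero])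
  have hPRD : ∀ y : ℝ, (p * q).eval y = h.eval y * ∏ x ∈ tF, (y - x) ^ (e x) := by
    intro y
    have hsplit : (∏ x ∈ tF, (y - x) ^ (R.count x))
        * (∏ x ∈ tF, (y - x) ^ (if x ∈ sOdd then 1 else 0))
        = ∏ x ∈ tF, (y - x) ^ (e x) := by
      rw [← Finset.prod_mul_distrib]
      exact Finset.prod_congr rfl fun x _ => by rw [← pow_add]
    rw [eval_mul, ← hfac, eval_mul, hPiEval y, hqEval y, ← hsplit]
    ring
  have hsign := sign_const_of_no_root hhne hroots0
  set ε₁ : ℝ := if 0 < h.eval 0 then 1 else -1 with hε₁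
  have hε₁h : ∀ y : ℝ, 0 < ε₁ * h.eval y := by
    rcases hsign with hs | hs
    · intro y; rw [hε₁, if_pos (hs 0)]; simpa using hs y
    · intro y; rw [hε₁, if_neg (not_lt.2 (hs 0).le)]
      have := hs y; linarith
  set σ : ℝ → ℝ := fun x =>
    if x ∈ Set.Ioo (-1:ℝ) 1 then 1 else if 1 ≤ x then (-1:ℝ)^(e x) else 1 with hσ
  have hσ_ne : ∀ x, σ x ≠ 0 := by
    intro x; rw [hσ]; dsimp only; split_ifs
    · exact one_ne_zero
    · exact pow_ne_zero _ (by norm_num)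
    · exact one_ne_zero
  have hfactor : ∀ y ∈ Set.Ioo (-1:ℝ) 1, ∀ x ∈ tF, 0 ≤ σ x * (y - x) ^ (e x) := by
    intro y hy x hx
    rw [hσ]; dsimp only
    by_cases h1 : x ∈ Set.Ioo (-1:ℝ) 1
    · rw [if_pos h1, one_mul]
      have hxodd : x ∈ sOdd ↔ Odd (R.count x) := by
        rw [hsOdd]
        simp only [Finset.mem_filter]
        exact ⟨fun hmem => hmem.2.2, fun hodd => ⟨hx, h1, hodd⟩⟩
      have hev : Even (e x) := by
        rw [he]; dsimp only
        rcases Nat.even_or_odd (R.count x) with hev | hod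
        · rw [if_neg (fun hmem => (Nat.not_odd_iff_even.2 hev) (hxodd.1 hmem)), add_zero]
          exact hev
        · rw [if_pos (hxodd.2 hod)]
          exact hod.add_one
      exact hev.pow_nonneg _
    · rw [if_neg h1]
      by_cases h2 : (1:ℝ) ≤ x
      · rw [if_pos h2]
        have hrw : (-1:ℝ)^(e x) * (y - x)^(e x) = (x - y)^(e x) := by
          rw [← mul_pow]; ring_nf
        rw [hrw]
        exact pow_nonneg (by linarith [hy.2]) _
      · rw [if_neg h2, one_mul]
        have hxle : x ≤ -1 := by
          push_neg at h2
          by_contra hcon; push_neg at hcon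
          exact h1 ⟨hcon, h2⟩
        exact pow_nonneg (by linarith [hy.1]) _
  set ε : ℝ := ε₁ * ∏ x ∈ tF, σ x with hε
  have hεne : ε ≠ 0 := mul_ne_zero (by rw [hε₁]; split_ifs <;> norm_num)
    (Finset.prod_ne_zero_iff.2 fun x _ => hσ_ne x)
  have hnonneg : ∀ y ∈ Set.Ioo (-1:ℝ) 1, 0 ≤ (C ε * (p * q)).eval y := by
    intro y hy
    rw [eval_mul, eval_C, hPRD y, hε]
    have hre : (ε₁ * ∏ x ∈ tF, σ x) * (h.eval y * ∏ x ∈ tF, (y - x)^(e x))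
        = (ε₁ * h.eval y) * ∏ x ∈ tF, (σ x * (y - x)^(e x)) := by
      rw [Finset.prod_mul_distrib]; ring
    rw [hre]
    exact mul_nonneg (hε₁h y).le (Finset.prod_nonneg fun x hx => hfactor y hy x hx)
  have hcard_le : sOdd.card ≤ n :=
    le_trans (Finset.card_filter_le _ _) (le_trans (Multiset.toFinset_card_le R)
      (le_trans (Polynomial.card_roots' p) (Lpoly_natDegree_le n)))
  have hn_le : n ≤ sOdd.card := by
    by_contra hlt
    push_neg at hlt
    have hqdeg : q.natDegree < n := by
      rw [hq, Lagrange.natDegree_nodal]; simpa using hlt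
    have hzero := ortho n q hqdeg
    have hint : ∫ x in (-1:ℝ)..1, (C ε * (p * q)).eval x = 0 := by
      have hev : ∀ x : ℝ, (C ε * (p * q)).eval x = ε * (p.eval x * q.eval x) := by
        intro x; rw [eval_mul, eval_C, eval_mul]
      simp_rw [hev]
      rw [intervalIntegral.integral_const_mul, hzero, mul_zero]
    have hpos := poly_integral_pos (p := C ε * (p * q))
      (mul_ne_zero (Polynomial.C_ne_zero.mpr hεne)
        (mul_ne_zero hp Lagrange.nodal_ne_zero))
      (by norm_num : (-1:ℝ) < 1) hnonneg
    rw [hint] at hpos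
    exact lt_irrefl 0 hpos
  have hcards : sOdd.card = n := le_antisymm hcard_le hn_le
  have hchain1 : tF.card = Multiset.card R := le_antisymm (Multiset.toFinset_card_le R) (by
    calc Multiset.card R ≤ p.natDegree := Polynomial.card_roots' p
    _ ≤ n := Lpoly_natDegree_le n
    _ = sOdd.card := hcards.symm
    _ ≤ tF.card := Finset.card_filter_le _ _)
  have hnodup : R.Nodup := Multiset.toFinset_card_eq_card_iff_nodup.mp hchain1
  have hsOdd_eq : sOdd = tF := Finset.eq_of_subset_of_card_le (Finset.filter_subset _ _) (by
    rw [hcards]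
    calc tF.card ≤ Multiset.card R := Multiset.toFinset_card_le R
    _ ≤ n := le_trans (Polynomial.card_roots' p) (Lpoly_natDegree_le n))
  have htFcard : tF.card = n := by rw [← hsOdd_eq, hcards]
  have hcardR : Multiset.card R = n := by rw [← hchain1, htFcard]
  have hdeg : p.natDegree = n :=
    le_antisymm (Lpoly_natDegree_le n) (hcardR ▸ Polynomial.card_roots' p)
  have hhdeg : h.natDegree = 0 := by omega
  obtain ⟨c, hc⟩ := Polynomial.natDegree_eq_zero.mp hhdeg
  have hcne : c ≠ 0 := by
    intro h0; rw [h0, map_zero] at hc; exact hhne hc.symm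
  have hProd : (R.map fun a => X - C a).prod = Lagrange.nodal sOdd id := by
    rw [hR, Polynomial.prod_multiset_root_eq_finset_root, Lagrange.nodal_eq, hsOdd_eq]
    refine Finset.prod_congr rfl fun x hx => ?_
    simp only [id_eq]
    rw [← Polynomial.count_roots,
      Multiset.count_eq_one_of_mem hnodup (Multiset.mem_toFinset.mp hx), pow_one]
  refine ⟨sOdd, hcards, ?_, ?_, c, hcne, ?_⟩
  · intro x hx
    exact (Finset.mem_filter.mp hx).2.1
  · intro x
    constructor
    · intro hx
      rw [hsOdd_eq]
      exact Multiset.mem_toFinset.mpr (Polynomial.mem_roots'.mpr ⟨hp, hx⟩)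
    · intro hx
      rw [hsOdd_eq] at hx
      exact (Polynomial.mem_roots'.mp (Multiset.mem_toFinset.mp hx)).2
  · rw [← hfac, ← hc, hProd, mul_comm]

noncomputable def rootsF (n : ℕ) : Finset ℝ :=
  if hn : 1 ≤ n then (exists_rootsF n hn).choose else ∅

lemma rootsF_spec (n : ℕ) (hn : 1 ≤ n) :
    (rootsF n).card = n ∧ ↑(rootsF n) ⊆ Set.Ioo (-1:ℝ) 1 ∧
    (∀ x : ℝ, (Lpoly n).eval x = 0 ↔ x ∈ rootsF n) ∧
    ∃ c : ℝ, c ≠ 0 ∧ Lpoly n = C c * (Lagrange.nodal (rootsF n) id) := by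
  rw [rootsF, dif_pos hn]
  exact (exists_rootsF n hn).choose_spec

lemma legRoots_eq (n : ℕ) (hn : 1 ≤ n) : legRoots n = ↑(rootsF n) := by
  obtain ⟨_, hsub, hiff, _⟩ := rootsF_spec n hn
  ext c
  constructor
  · rintro ⟨_, hc⟩
    exact (hiff c).mp (by rw [← legendreP_eq_eval]; exact hc)
  · intro hc
    refine ⟨Set.Ioo_subset_Icc_self (hsub hc), ?_⟩
    rw [legendreP_eq_eval]
    exact (hiff c).mpr hc

lemma exact1 (n : ℕ) (hn : 1 ≤ n) (p : ℝ[X]) (hp : p.natDegree ≤ 2 * n - 1) :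
    ∫ x in (-1:ℝ)..1, p.eval x
      = ∑ c ∈ rootsF n,
          (∫ x in (-1:ℝ)..1, (Lagrange.basis (rootsF n) id c).eval x) * p.eval c := by
  obtain ⟨hcard, hsub, hiff, c, hcne, hLc⟩ := rootsF_spec n hn
  set s := rootsF n with hs
  have hinj : Set.InjOn id (↑s : Set ℝ) := Set.injOn_id _
  set N := Lagrange.nodal s id with hN
  have hNmonic : N.Monic := Lagrange.nodal_monic
  have hNdeg : N.natDegree = n := by rw [hN, Lagrange.natDegree_nodal, hcard]
  set A := p /ₘ N with hA
  set Rr := p %ₘ N with hRr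
  have hsplit : p = N * A + Rr := by
    rw [hA, hRr, add_comm]; exact (Polynomial.modByMonic_add_div p N).symm
  have hRrdegW : Rr.degree < (s.card : WithBot ℕ) := by
    have := Polynomial.degree_modByMonic_lt p hNmonic
    rwa [Lagrange.degree_nodal] at this
  have hRrdeg : Rr.natDegree < n := by
    rcases eq_or_ne Rr 0 with h0 | h0
    · rw [h0, natDegree_zero]; omega
    · rw [← hcard]
      exact (Polynomial.natDegree_lt_iff_degree_lt h0).mpr hRrdegW
  have hAdeg : A.natDegree < n := by
    rcases eq_or_ne A 0 with h0 | h0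
    · rw [h0, natDegree_zero]; omega
    · have h1 : (N * A).natDegree = n + A.natDegree := by
        rw [hNmonic.natDegree_mul' h0, hNdeg]
      have h2 : N * A = p - Rr := by rw [hsplit]; ring
      have h3 : (N * A).natDegree ≤ 2 * n - 1 := by
        rw [h2]
        exact le_trans (Polynomial.natDegree_sub_le p Rr) (by omega)
      omega
  -- orthogonality part
  have hNA : ∫ x in (-1:ℝ)..1, (N * A).eval x = 0 := by
    have hNAeval : ∀ x : ℝ, (N * A).eval x = c⁻¹ * ((Lpoly n).eval x * A.eval x) := by
      intro x
      rw [hLc]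
      simp only [eval_mul, eval_C]
      rw [inv_mul_eq_div, eq_div_iff hcne]
      ring
    simp_rw [hNAeval]
    rw [intervalIntegral.integral_const_mul, ortho n A hAdeg, mul_zero]
  -- interpolation part
  have hinterp : Rr = ∑ i ∈ s, C (Rr.eval i) * Lagrange.basis s id i := by
    have h := Lagrange.eq_interpolate (f := Rr) hinj hRrdegW
    conv_lhs => rw [h]
    rw [Lagrange.interpolate_apply]
    simp only [id_eq]
  have hRint : ∫ x in (-1:ℝ)..1, Rr.eval x
      = ∑ i ∈ s, (∫ x in (-1:ℝ)..1, (Lagrange.basis s id i).eval x) * Rr.eval i := by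
    conv_lhs => rw [hinterp]
    have hev : ∀ x : ℝ, (∑ i ∈ s, C (Rr.eval i) * Lagrange.basis s id i).eval x
        = ∑ i ∈ s, Rr.eval i * (Lagrange.basis s id i).eval x := by
      intro x
      rw [eval_finset_sum]
      exact Finset.sum_congr rfl fun i _ => by rw [eval_mul, eval_C]
    simp_rw [hev]
    rw [intervalIntegral.integral_finset_sum]
    · exact Finset.sum_congr rfl fun i _ => by
        rw [intervalIntegral.integral_const_mul]; ring
    · intro i _
      exact ((continuous_const.mul (Lagrange.basis s id i).continuous).intervalIntegrable _ _)
  -- combine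
  have heval : ∀ x : ℝ, p.eval x = (N * A).eval x + Rr.eval x := by
    intro x; rw [← eval_add, ← hsplit]
  simp_rw [heval]
  rw [intervalIntegral.integral_add
    (((N * A).continuous).intervalIntegrable _ _) ((Rr.continuous).intervalIntegrable _ _),
    hNA, zero_add, hRint]
  refine Finset.sum_congr rfl fun i hi => ?_
  congr 1
  have hz : eval i N = 0 := by
    have := Lagrange.eval_nodal_at_node (s := s) (v := id) (i := i) hi
    simpa using this
  rw [eval_mul, hz, zero_mul, zero_add]

lemma sub_lemma {a b : ℝ} (hab : a < b) (g : ℝ[X]) :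
    ∫ x in a..b, g.eval ((2*x - (a+b))/(b-a))
      = ((b-a)/2) * ∫ y in (-1:ℝ)..1, g.eval y := by
  have hba : b - a ≠ 0 := sub_ne_zero.mpr hab.ne'
  have hc : (2/(b-a)) ≠ 0 := by positivity
  have hrw : ∀ x : ℝ, (2*x - (a+b))/(b-a) = (2/(b-a)) * x + (-(a+b)/(b-a)) := by
    intro x; field_simp; try ring
  simp_rw [hrw]
  rw [intervalIntegral.integral_comp_mul_add (fun y => g.eval y) hc (-(a+b)/(b-a))]
  have e1 : 2/(b-a) * a + -(a+b)/(b-a) = -1 := by field_simp; try ring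
  have e2 : 2/(b-a) * b + -(a+b)/(b-a) = 1 := by field_simp; try ring
  rw [e1, e2, smul_eq_mul]
  congr 1
  rw [inv_div]

noncomputable def phiAB (a b c : ℝ) : ℝ := ((b - a) * c + (a + b)) / 2

noncomputable def wt (n : ℕ) (a b c : ℝ) : ℝ :=
  ∫ x in a..b, (Lagrange.basis (rootsF n) id c).eval ((2*x - (a+b))/(b-a))

lemma exactab (n : ℕ) (hn : 1 ≤ n) {a b : ℝ} (hab : a < b) (p : ℝ[X])
    (hp : p.natDegree ≤ 2 * n - 1) :
    ∑ c ∈ rootsF n, wt n a b c * p.eval (phiAB a b c) = ∫ x in a..b, p.eval x := by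
  have hba : b - a ≠ 0 := sub_ne_zero.mpr hab.ne'
  set P := p.comp (C ((b-a)/2) * X + C ((a+b)/2)) with hP
  have hPdeg : P.natDegree ≤ 2 * n - 1 := by
    rw [hP, natDegree_comp, natDegree_linear (by positivity : (b-a)/2 ≠ 0), mul_one]
    exact hp
  have hPeval : ∀ y : ℝ, P.eval y = p.eval (((b-a)/2) * y + (a+b)/2) := by
    intro y; rw [hP, eval_comp, eval_add, eval_mul, eval_C, eval_X, eval_C]
  have hid : ∀ x : ℝ, p.eval x = P.eval ((2*x - (a+b))/(b-a)) := by
    intro x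
    rw [hPeval]
    congr 1
    field_simp
    try ring
  have hnode : ∀ c : ℝ, P.eval c = p.eval (phiAB a b c) := by
    intro c
    rw [hPeval, phiAB]
    congr 1
    field_simp
    try ring
  calc ∑ c ∈ rootsF n, wt n a b c * p.eval (phiAB a b c)
      = ((b-a)/2) * ∑ c ∈ rootsF n,
          (∫ x in (-1:ℝ)..1, (Lagrange.basis (rootsF n) id c).eval x) * P.eval c := by
        rw [Finset.mul_sum]
        refine Finset.sum_congr rfl fun c _ => ?_
        rw [wt, sub_lemma hab, hnode c]
        ring
    _ = ((b-a)/2) * ∫ y in (-1:ℝ)..1, P.eval y := by rw [← exact1 n hn P hPdeg]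
    _ = ∫ x in a..b, p.eval x := by
        simp_rw [hid]
        rw [sub_lemma hab P]

lemma glWeight_node_s8 (n : ℕ) (hn : 1 ≤ n) {a b : ℝ} (hab : a < b) {c₀ : ℝ}
    (hc : c₀ ∈ rootsF n) : glWeight n a b (phiAB a b c₀) = wt n a b c₀ := by
  have hba : b - a ≠ 0 := sub_ne_zero.mpr hab.ne'
  have hψt : (2 * phiAB a b c₀ - (a + b)) / (b - a) = c₀ := by
    rw [phiAB]; field_simp; try ring
  have hmem : (2 * phiAB a b c₀ - (a + b)) / (b - a) ∈ legRoots n := by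
    rw [hψt, legRoots_eq n hn]; exact hc
  rw [glWeight, if_pos ⟨hab, hmem⟩, wt]
  refine intervalIntegral.integral_congr fun x _ => ?_
  have hset : legRoots n \ {(2 * phiAB a b c₀ - (a + b)) / (b - a)}
      = ↑((rootsF n).erase c₀) := by
    rw [hψt, legRoots_eq n hn, Finset.coe_erase]
  rw [hset, finprod_mem_coe_finset, Lagrange.basis, eval_prod]
  refine Finset.prod_congr rfl fun c hcmem => ?_
  obtain ⟨hne, hcs⟩ := Finset.mem_erase.mp hcmem
  have hc0c : c₀ - c ≠ 0 := sub_ne_zero.mpr (Ne.symm hne)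
  have h2 : 2 * phiAB a b c₀ - (b - a) * c - (a + b) = (b - a) * (c₀ - c) := by
    rw [phiAB]; field_simp; ring
  rw [Lagrange.basisDivisor, eval_mul, eval_C, eval_sub, eval_X, eval_C, id_eq, id_eq, h2]
  rw [div_eq_iff (mul_ne_zero hba hc0c)]
  field_simp
  ring

lemma glWeight_supp (n : ℕ) (hn : 1 ≤ n) {a b : ℝ} (t : ℝ)
    (h : glWeight n a b t ≠ 0) : a < b ∧ t ∈ (rootsF n).image (phiAB a b) := by
  rw [glWeight] at h
  split_ifs at h with hcond
  · obtain ⟨hab, hmem⟩ := hcond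
    have hba : b - a ≠ 0 := sub_ne_zero.mpr hab.ne'
    rw [legRoots_eq n hn] at hmem
    refine ⟨hab, Finset.mem_image.mpr ⟨_, hmem, ?_⟩⟩
    rw [phiAB]
    field_simp
    try ring
  · exact absurd rfl h

lemma injOn_phiAB {a b : ℝ} (hab : a < b) (s : Finset ℝ) :
    Set.InjOn (phiAB a b) ↑s := by
  intro x _ y _ hxy
  rw [phiAB, phiAB, div_eq_div_iff (by norm_num) (by norm_num)] at hxy
  have hba : b - a ≠ 0 := sub_ne_zero.mpr hab.ne'
  have : (b - a) * x = (b - a) * y := by linarith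
  exact mul_left_cancel₀ hba this

lemma quad_sum (n : ℕ) (hn : 1 ≤ n) {a b : ℝ} (hab : a < b) (p : ℝ[X])
    (hp : p.natDegree ≤ 2 * n - 1) :
    ∑ t ∈ (rootsF n).image (phiAB a b), glWeight n a b t * p.eval t
      = ∫ x in a..b, p.eval x := by
  rw [Finset.sum_image (fun x hx y hy hxy => injOn_phiAB hab (rootsF n) hx hy hxy)]
  rw [← exactab n hn hab p hp]
  exact Finset.sum_congr rfl fun c hc => by rw [glWeight_node_s8 n hn hab hc]

lemma wt_nonneg (n : ℕ) (hn : 1 ≤ n) {a b : ℝ} (hab : a < b) {c₀ : ℝ}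
    (hc : c₀ ∈ rootsF n) : 0 ≤ wt n a b c₀ := by
  have hba : b - a ≠ 0 := sub_ne_zero.mpr hab.ne'
  obtain ⟨hcard, hsub, _, _⟩ := rootsF_spec n hn
  set s := rootsF n with hs
  set ψp : ℝ[X] := C (2/(b-a)) * X + C (-(a+b)/(b-a)) with hψp
  have hψeval : ∀ x : ℝ, ψp.eval x = (2*x - (a+b))/(b-a) := by
    intro x; rw [hψp]; simp only [eval_add, eval_mul, eval_C, eval_X]; field_simp; try ring
  set B := (Lagrange.basis s id c₀).comp ψp with hB
  have hBeval : ∀ x : ℝ, B.eval x = (Lagrange.basis s id c₀).eval ((2*x - (a+b))/(b-a)) := by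
    intro x; rw [hB, eval_comp, hψeval]
  have hBdeg : (B^2).natDegree ≤ 2 * n - 1 := by
    rw [natDegree_pow, hB, natDegree_comp,
      Lagrange.natDegree_basis (Set.injOn_id (↑s : Set ℝ)) hc,
      natDegree_linear (by positivity : (2:ℝ)/(b-a) ≠ 0), mul_one, hcard]
    omega
  have hex := exactab n hn hab (B^2) hBdeg
  have hdelta : ∀ c ∈ s, (B^2).eval (phiAB a b c) = if c = c₀ then 1 else 0 := by
    intro c hcs
    have hψφ : (2 * phiAB a b c - (a+b))/(b-a) = c := by
      rw [phiAB]; field_simp; try ring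
    rw [eval_pow, hBeval, hψφ]
    split_ifs with h
    · rw [h]
      have := Lagrange.eval_basis_self (Set.injOn_id (↑s : Set ℝ)) hc
      simp only [id_eq] at this
      rw [this]; norm_num
    · have := Lagrange.eval_basis_of_ne (s := s) (v := id) (Ne.symm h) hcs
      simp only [id_eq] at this
      rw [this]; norm_num
  have hsum : ∑ c ∈ s, wt n a b c * (B^2).eval (phiAB a b c) = wt n a b c₀ := by
    rw [Finset.sum_congr rfl (fun c hcs => by rw [hdelta c hcs])]
    simp only [mul_ite, mul_one, mul_zero]
    rw [Finset.sum_ite_eq' s c₀ (fun c => wt n a b c), if_pos hc]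
  rw [hsum] at hex
  rw [hex]
  have : ∀ x : ℝ, (B^2).eval x = (B.eval x)^2 := fun x => by rw [eval_pow]
  simp_rw [this]
  exact intervalIntegral.integral_nonneg hab.le (fun x _ => sq_nonneg _)

lemma glWeight_nonneg (n : ℕ) (hn : 1 ≤ n) (a b t : ℝ) : 0 ≤ glWeight n a b t := by
  rcases eq_or_ne (glWeight n a b t) 0 with h | h
  · rw [h]
  · obtain ⟨hab, hmem⟩ := glWeight_supp n hn t h
    obtain ⟨c, hc, hphi⟩ := Finset.mem_image.mp hmem
    rw [← hphi, glWeight_node_s8 n hn hab hc]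
    exact wt_nonneg n hn hab hc

noncomputable def nodesF (Q : ℕ) (T s : ℝ) : Finset ℝ := (rootsF Q).image (phiAB s T)

noncomputable def Afin (T : ℝ) (Q : ℕ) : ℕ → Finset ℝ
  | 0 => {0}
  | n + 1 => (Afin T Q n).biUnion (fun s => nodesF Q T s)

section Part4

variable {T : ℝ} {Q : ℕ}

lemma nodes_sub (hQ : 1 ≤ Q) {s : ℝ} (hs : s < T) :
    ↑(nodesF Q T s) ⊆ Set.Ioo s T := by
  obtain ⟨_, hsub, _, _⟩ := rootsF_spec Q hQ
  intro t ht
  obtain ⟨c, hc, rfl⟩ := Finset.mem_image.mp (by exact_mod_cast ht)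
  obtain ⟨hc1, hc2⟩ := hsub hc
  constructor
  · rw [phiAB]; nlinarith
  · rw [phiAB]; nlinarith

lemma Afin_sub (hT : 0 < T) (hQ : 1 ≤ Q) : ∀ n, ↑(Afin T Q n) ⊆ Set.Ico 0 T := by
  intro n
  induction n with
  | zero =>
    intro t ht
    simp only [Afin, Finset.coe_singleton, Set.mem_singleton_iff] at ht
    rw [ht]
    exact ⟨le_rfl, hT⟩
  | succ n ih =>
    intro t ht
    simp only [Afin, Finset.coe_biUnion, Set.mem_iUnion] at ht
    obtain ⟨s, hsmem, htmem⟩ := ht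
    have hs := ih hsmem
    have := nodes_sub hQ hs.2 htmem
    exact ⟨le_trans hs.1 this.1.le, this.2⟩

lemma glW_zero_off (hQ : 1 ≤ Q) {s t : ℝ} (h : t ∉ nodesF Q T s) :
    glWeight Q s T t = 0 := by
  by_contra hne
  exact h (glWeight_supp Q hQ t hne).2

lemma qbar_succ_eq (hT : 0 < T) (hQ : 1 ≤ Q) {n : ℕ}
    (hP : Function.support (qbar T Q n) ⊆ ↑(Afin T Q n)) (t : ℝ) :
    qbar T Q (n + 1) t = ∑ s ∈ Afin T Q n, qbar T Q n s * glWeight Q s T t := by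
  show (∑ᶠ s ∈ Set.Icc (0:ℝ) t, qbar T Q n s * glWeight Q s T t) = _
  apply finsum_mem_eq_sum_of_inter_support_eq
  ext x
  simp only [Set.mem_inter_iff, Function.mem_support, Finset.mem_coe]
  constructor
  · rintro ⟨hxI, hxs⟩
    have hq : qbar T Q n x ≠ 0 := fun h0 => hxs (by rw [h0, zero_mul])
    exact ⟨hP hq, hxs⟩
  · rintro ⟨hxA, hxs⟩
    have hglW : glWeight Q x T t ≠ 0 := fun h0 => hxs (by rw [h0, mul_zero])
    have hx0 : (0:ℝ) ≤ x := (Afin_sub hT hQ n hxA).1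
    have hxT : x < T := (Afin_sub hT hQ n hxA).2
    have htIoo : t ∈ Set.Ioo x T :=
      nodes_sub hQ hxT ((glWeight_supp Q hQ t hglW).2)
    exact ⟨⟨hx0, htIoo.1.le⟩, hxs⟩

lemma qbar_support (hT : 0 < T) (hQ : 1 ≤ Q) :
    ∀ n, Function.support (qbar T Q n) ⊆ ↑(Afin T Q n) := by
  intro n
  induction n with
  | zero =>
    intro t ht
    rw [Function.mem_support] at ht
    simp only [qbar] at ht
    by_contra hmem
    simp only [Afin, Finset.coe_singleton, Set.mem_singleton_iff] at hmem
    rw [if_neg hmem] at ht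
    exact ht rfl
  | succ n ih =>
    intro t ht
    rw [Function.mem_support, qbar_succ_eq hT hQ ih t] at ht
    obtain ⟨s, hsmem, hsne⟩ := Finset.exists_ne_zero_of_sum_ne_zero ht
    have hglW : glWeight Q s T t ≠ 0 := fun h0 => hsne (by rw [h0, mul_zero])
    have htn : t ∈ nodesF Q T s := (glWeight_supp Q hQ t hglW).2
    simp only [Afin, Finset.coe_biUnion, Set.mem_iUnion]
    exact ⟨s, hsmem, htn⟩

lemma qbar_nonneg (hT : 0 < T) (hQ : 1 ≤ Q) : ∀ n t, 0 ≤ qbar T Q n t := by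
  intro n
  induction n with
  | zero =>
    intro t
    simp only [qbar]
    split_ifs <;> norm_num
  | succ n ih =>
    intro t
    rw [qbar_succ_eq hT hQ (qbar_support hT hQ n) t]
    exact Finset.sum_nonneg fun s _ =>
      mul_nonneg (ih s) (glWeight_nonneg Q hQ s T t)

lemma key_sum (hT : 0 < T) (hQ : 1 ≤ Q) :
    ∀ n j, n + j ≤ 2 * Q →
      ∑ s ∈ Afin T Q n, qbar T Q n s * ((T - s) ^ j / (j.factorial : ℝ))
        = T ^ (n + j) / ((n + j).factorial : ℝ) := by
  intro n
  induction n with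
  | zero =>
    intro j _
    simp only [Afin, Finset.sum_singleton, qbar, if_pos rfl, one_mul, sub_zero, zero_add]
    norm_num
  | succ n ih =>
    intro j hj
    -- the polynomial (T - X)^j / j!
    set pj : Polynomial ℝ := Polynomial.C (1 / (j.factorial : ℝ))
      * (Polynomial.C T - Polynomial.X) ^ j with hpj
    have hpjeval : ∀ x : ℝ, pj.eval x = (T - x) ^ j / (j.factorial : ℝ) := by
      intro x
      rw [hpj]
      simp only [Polynomial.eval_mul, Polynomial.eval_C, Polynomial.eval_pow,
        Polynomial.eval_sub, Polynomial.eval_X]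
      ring
    have hpjdeg : pj.natDegree ≤ 2 * Q - 1 := by
      refine le_trans Polynomial.natDegree_mul_le ?_
      rw [Polynomial.natDegree_C, zero_add]
      refine le_trans (Polynomial.natDegree_pow_le) ?_
      have : (Polynomial.C T - Polynomial.X : Polynomial ℝ).natDegree ≤ 1 := by
        refine le_trans (Polynomial.natDegree_sub_le _ _) ?_
        simp [Polynomial.natDegree_C, Polynomial.natDegree_X]
      calc j * (Polynomial.C T - Polynomial.X : Polynomial ℝ).natDegree ≤ j * 1 :=
            Nat.mul_le_mul_left j this
        _ = j := mul_one j
        _ ≤ 2 * Q - 1 := by omega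
    have hinner : ∀ s ∈ Afin T Q n,
        ∑ t ∈ Afin T Q (n+1), glWeight Q s T t * ((T - t) ^ j / (j.factorial : ℝ))
          = (T - s) ^ (j+1) / ((j+1).factorial : ℝ) := by
      intro s hsmem
      have hs0 : (0:ℝ) ≤ s := (Afin_sub hT hQ n hsmem).1
      have hsT : s < T := (Afin_sub hT hQ n hsmem).2
      have hsubn : nodesF Q T s ⊆ Afin T Q (n+1) := by
        intro t htn
        simp only [Afin]
        exact Finset.mem_biUnion.mpr ⟨s, hsmem, htn⟩
      have hstep1 : ∑ t ∈ Afin T Q (n+1), glWeight Q s T t * ((T - t) ^ j / (j.factorial : ℝ))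
          = ∑ t ∈ nodesF Q T s, glWeight Q s T t * ((T - t) ^ j / (j.factorial : ℝ)) := by
        refine (Finset.sum_subset hsubn ?_).symm
        intro t _ htn
        rw [glW_zero_off hQ htn, zero_mul]
      rw [hstep1]
      have hquad := quad_sum Q hQ hsT pj hpjdeg
      rw [nodesF]
      simp_rw [← hpjeval]
      rw [hquad]
      -- compute the integral
      have hint : ∫ x in s..T, pj.eval x = (T - s)^(j+1) / ((j+1).factorial : ℝ) := by
        simp_rw [hpjeval]
        have h1 : ∀ x : ℝ, (T - x)^j / (j.factorial : ℝ)
            = (1 / (j.factorial : ℝ)) * (T - x)^j := fun x => by ring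
        simp_rw [h1]
        rw [intervalIntegral.integral_const_mul]
        rw [intervalIntegral.integral_comp_sub_left (fun u => u ^ j) T]
        rw [integral_pow]
        rw [Nat.factorial_succ, sub_self, zero_pow (by omega : j + 1 ≠ 0), sub_zero]
        push_cast
        have hjf : (j.factorial : ℝ) ≠ 0 := Nat.cast_ne_zero.mpr j.factorial_ne_zero
        field_simp
        try ring
        try exact Or.inl trivial
      rw [hint]
    calc ∑ t ∈ Afin T Q (n+1), qbar T Q (n+1) t * ((T - t) ^ j / (j.factorial : ℝ))
        = ∑ t ∈ Afin T Q (n+1), ∑ s ∈ Afin T Q n,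
            qbar T Q n s * glWeight Q s T t * ((T - t) ^ j / (j.factorial : ℝ)) := by
          refine Finset.sum_congr rfl fun t _ => ?_
          rw [qbar_succ_eq hT hQ (qbar_support hT hQ n) t, Finset.sum_mul]
      _ = ∑ s ∈ Afin T Q n, qbar T Q n s *
            ∑ t ∈ Afin T Q (n+1), glWeight Q s T t * ((T - t) ^ j / (j.factorial : ℝ)) := by
          rw [Finset.sum_comm]
          refine Finset.sum_congr rfl fun s _ => ?_
          rw [Finset.mul_sum]
          refine Finset.sum_congr rfl fun t _ => ?_
          ring
      _ = ∑ s ∈ Afin T Q n, qbar T Q n s * ((T - s) ^ (j+1) / ((j+1).factorial : ℝ)) := by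
          refine Finset.sum_congr rfl fun s hs => ?_
          rw [hinner s hs]
      _ = T ^ (n + (j+1)) / ((n + (j+1)).factorial : ℝ) := ih (j+1) (by omega)
      _ = T ^ (n + 1 + j) / ((n + 1 + j).factorial : ℝ) := by
          rw [show n + (j+1) = n + 1 + j from by omega]

end Part4

end GLAux

theorem stmt8 (T : ℝ) (hT : 0 < T) (d : ℕ) (hd : 1 ≤ d)
    {Ω : Type} [mΩ : MeasurableSpace Ω] (P : Measure Ω) [IsProbabilityMeasure P]
    (W : ℝ → Ω → (Fin d → ℝ)) (hW : IsStdBM P d W)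
    (Q : ℕ) (hQ : 1 ≤ Q) (k : ℕ) (hk : k ≤ 2 * Q - 1) :
    semiNorm P W T k Q (fun _ _ _ => (1 : ℝ))
      = ENNReal.ofReal (T ^ k / (k.factorial : ℝ)) := by
  have hbody : ∀ (s u : ℝ) (z : Fin d → ℝ),
      (∫⁻ ω, ENNReal.ofReal (((fun _ _ _ => (1:ℝ)) s (z + W u ω) ω) ^ 2) ∂P) ^ (1/2 : ℝ)
        = 1 := by
    intro s u z
    simp only [one_pow, ENNReal.ofReal_one, MeasureTheory.lintegral_one,
      MeasureTheory.measure_univ, ENNReal.one_rpow]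
  have hSup : ∀ t ∈ Set.Icc (0:ℝ) T,
      (⨆ s ∈ Set.Icc t T, ⨆ u ∈ Set.Icc (0:ℝ) s, ⨆ z : Fin d → ℝ,
        (∫⁻ ω, ENNReal.ofReal (((fun _ _ _ => (1:ℝ)) s (z + W u ω) ω) ^ 2) ∂P) ^ (1/2 : ℝ))
        = 1 := by
    intro t ht
    simp only [one_pow, ENNReal.ofReal_one, MeasureTheory.lintegral_one,
      MeasureTheory.measure_univ, ENNReal.one_rpow]
    refine le_antisymm (iSup₂_le fun s _ => iSup₂_le fun u _ => iSup_le fun _ => le_rfl) ?_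
    refine le_iSup₂_of_le T ⟨ht.2, le_rfl⟩ ?_
    refine le_iSup₂_of_le 0 ⟨le_rfl, le_trans ht.1 ht.2⟩ ?_
    exact le_iSup_of_le 0 le_rfl
  rw [semiNorm]
  set F : ℝ → ℝ≥0∞ := fun t => ENNReal.ofReal (qbar T Q k t) *
      ⨆ s ∈ Set.Icc t T, ⨆ u ∈ Set.Icc (0:ℝ) s, ⨆ z : Fin d → ℝ,
        (∫⁻ ω, ENNReal.ofReal (((fun _ _ _ => (1:ℝ)) s (z + W u ω) ω) ^ 2) ∂P) ^ (1/2 : ℝ)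
    with hF
  have hsupp : ∀ x, F x ≠ 0 → qbar T Q k x ≠ 0 := by
    intro x hx hq
    apply hx
    rw [hF]
    simp only [hq, ENNReal.ofReal_zero, zero_mul]
  have hfin : (∑ᶠ t ∈ Set.Icc (0:ℝ) T, F t) = ∑ t ∈ Afin T Q k, F t := by
    apply finsum_mem_eq_sum_of_inter_support_eq
    ext x
    simp only [Set.mem_inter_iff, Function.mem_support, Finset.mem_coe]
    constructor
    · rintro ⟨_, hxs⟩
      exact ⟨qbar_support hT hQ k (hsupp x hxs), hxs⟩
    · rintro ⟨hxA, hxs⟩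
      have := Afin_sub hT hQ k hxA
      exact ⟨⟨this.1, this.2.le⟩, hxs⟩
  rw [hfin]
  have hterm : ∀ t ∈ Afin T Q k, F t = ENNReal.ofReal (qbar T Q k t) := by
    intro t ht
    have htI : t ∈ Set.Icc (0:ℝ) T := by
      have := Afin_sub hT hQ k ht
      exact ⟨this.1, this.2.le⟩
    simp only [hF]
    rw [hSup t htI, mul_one]
  rw [Finset.sum_congr rfl hterm]
  rw [← ENNReal.ofReal_sum_of_nonneg (fun t _ => qbar_nonneg hT hQ k t)]
  congr 1
  have hks := key_sum hT hQ k 0 (by omega)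
  simp only [pow_zero, Nat.factorial_zero, Nat.cast_one, div_one, mul_one, add_zero] at hks
  exact hks
end

section
/- For every α ∈ [0, 1/4] and every n ∈ ℕ it holds that n^{2αn} · ((2n+1)!)^{1−α} · (n!)^4 / ( (2n+1) · ((2n)!)^3 ) ≤ 1. -/
-- (n+1)^n ≤ 3 * n^n
lemma aux_succ_pow (n : ℕ) (hn : 1 ≤ n) : (n+1)^n ≤ 3 * n^n := by
  have h1 : ((n:ℝ)+1)^n ≤ 3 * (n:ℝ)^n := by
    have hn0 : (0:ℝ) < n := by exact_mod_cast hn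
    have h : (1 + 1/(n:ℝ))^n ≤ Real.exp 1 := by
      have := Real.add_one_le_exp (1/(n:ℝ))
      calc (1 + 1/(n:ℝ))^n ≤ (Real.exp (1/n))^n := by
            apply pow_le_pow_left₀ (by positivity)
            linarith
        _ = Real.exp (1/n * n) := by rw [← Real.exp_nat_mul]; ring_nf
        _ = Real.exp 1 := by rw [one_div, inv_mul_cancel₀ hn0.ne']
    have he : Real.exp 1 ≤ 3 := by
      have := Real.exp_one_lt_d9; linarith
    have key : ((n:ℝ)+1)^n = (1 + 1/(n:ℝ))^n * (n:ℝ)^n := by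
      rw [← mul_pow]; congr 1; field_simp
    rw [key]
    exact mul_le_mul_of_nonneg_right (h.trans he) (by positivity)
  exact_mod_cast h1

lemma aux_npow (n : ℕ) : n^n ≤ 3^n * n.factorial := by
  induction n with
  | zero => simp
  | succ k ih =>
    rcases Nat.eq_zero_or_pos k with rfl | hk
    · simp
    calc (k+1)^(k+1) = (k+1)^k * (k+1) := by ring
      _ ≤ 3 * k^k * (k+1) := by
          exact Nat.mul_le_mul_right _ (aux_succ_pow k hk)
      _ ≤ 3 * (3^k * k.factorial) * (k+1) := by
          exact Nat.mul_le_mul_right _ (Nat.mul_le_mul_left _ ih)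
      _ = 3^(k+1) * (k+1).factorial := by
          rw [Nat.factorial_succ]; ring

lemma aux_poly (n : ℕ) (hn : 1 ≤ n) : (2*n+1)^8 ≤ 29000^n := by
  induction n with
  | zero => omega
  | succ k ih =>
    rcases Nat.eq_zero_or_pos k with rfl | hk
    · norm_num
    calc (2*(k+1)+1)^8 ≤ (3*(2*k+1))^8 := Nat.pow_le_pow_left (by omega) 8
      _ = 6561 * (2*k+1)^8 := by ring
      _ ≤ 29000 * 29000^k := Nat.mul_le_mul (by norm_num) (ih hk)
      _ = 29000^(k+1) := by ring

lemma aux_sq_fact (n : ℕ) : n.factorial * n.factorial ≤ (2*n).factorial :=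
  Nat.le_of_dvd (Nat.factorial_pos _) (by
    have := Nat.factorial_mul_factorial_dvd_factorial_add n n
    rwa [two_mul])

lemma aux_binom (n : ℕ) (hn : 1 ≤ n) :
    4^n * (n.factorial * n.factorial) ≤ (2*n+1) * (2*n).factorial := by
  have h1 : 4^n ≤ (2*n+1) * Nat.centralBinom n := by
    calc 4^n ≤ 2*n * Nat.centralBinom n :=
          Nat.four_pow_le_two_mul_self_mul_centralBinom n hn
      _ ≤ (2*n+1) * Nat.centralBinom n := Nat.mul_le_mul_right _ (by omega)
  have h2 : Nat.centralBinom n * (n.factorial * n.factorial) = (2*n).factorial := by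
    have := Nat.choose_mul_factorial_mul_factorial (show n ≤ 2*n by omega)
    simpa [Nat.centralBinom, two_mul, Nat.add_sub_cancel, mul_assoc] using this
  calc 4^n * (n.factorial * n.factorial)
      ≤ ((2*n+1) * Nat.centralBinom n) * (n.factorial * n.factorial) :=
        Nat.mul_le_mul_right _ h1
    _ = (2*n+1) * (2*n).factorial := by rw [mul_assoc, h2]

-- key nat lemma
lemma aux_key (n : ℕ) (hn : 1 ≤ n) :
    n^(2*n) * n.factorial^16 ≤ (2*n+1) * (2*n).factorial^9 := by
  have h1 : (4^n * (n.factorial * n.factorial))^9 ≤ ((2*n+1) * (2*n).factorial)^9 :=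
    Nat.pow_le_pow_left (aux_binom n hn) 9
  have h2 : n^(2*n) ≤ 9^n * n.factorial^2 := by
    calc n^(2*n) = (n^n)^2 := by rw [← pow_mul, mul_comm]
      _ ≤ (3^n * n.factorial)^2 := Nat.pow_le_pow_left (aux_npow n) 2
      _ = 9^n * n.factorial^2 := by rw [mul_pow, ← pow_mul, pow_mul']; norm_num
  have h3 : (2*n+1)^8 * (n^(2*n) * n.factorial^16) ≤ (2*n+1)^8 * ((2*n+1) * (2*n).factorial^9) := by
    calc (2*n+1)^8 * (n^(2*n) * n.factorial^16)
        ≤ 29000^n * (9^n * n.factorial^2 * n.factorial^16) :=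
          Nat.mul_le_mul (aux_poly n hn) (Nat.mul_le_mul_right _ h2)
      _ = (29000*9)^n * n.factorial^18 := by rw [mul_pow]; ring
      _ ≤ (4^9)^n * n.factorial^18 := by
          apply Nat.mul_le_mul_right
          exact Nat.pow_le_pow_left (by norm_num) n
      _ = (4^n * (n.factorial * n.factorial))^9 := by
          rw [mul_pow, ← pow_mul, ← pow_mul, mul_comm 9 n]
          congr 1
          rw [← pow_two, ← pow_mul]
      _ ≤ ((2*n+1) * (2*n).factorial)^9 := h1
      _ = (2*n+1)^8 * ((2*n+1) * (2*n).factorial^9) := by ring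
  exact Nat.le_of_mul_le_mul_left h3 (by positivity)

theorem stmt13 (α : ℝ) (hα : α ∈ Set.Icc (0 : ℝ) (1 / 4)) (n : ℕ) (hn : 1 ≤ n) :
    (n : ℝ) ^ (2 * α * (n : ℝ)) * ((2 * n + 1).factorial : ℝ) ^ ((1 : ℝ) - α)
        * ((n.factorial : ℝ)) ^ 4
      / ((2 * (n : ℝ) + 1) * (((2 * n).factorial : ℝ)) ^ 3) ≤ 1 := by
  obtain ⟨hα0, hα4⟩ := hα
  have hN0 : (0:ℝ) ≤ (n:ℝ) := Nat.cast_nonneg n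
  have hF0 : (0:ℝ) < (n.factorial:ℝ) := Nat.cast_pos.mpr n.factorial_pos
  have hG0 : (0:ℝ) < ((2*n).factorial:ℝ) := Nat.cast_pos.mpr (Nat.factorial_pos _)
  have hA0 : (0:ℝ) < ((2*n+1).factorial:ℝ) := Nat.cast_pos.mpr (Nat.factorial_pos _)
  have h2n1 : (0:ℝ) < 2*(n:ℝ)+1 := by positivity
  set F : ℝ := (n.factorial:ℝ)
  set G : ℝ := ((2*n).factorial:ℝ)
  set A : ℝ := ((2*n+1).factorial:ℝ)
  have hAeq : A = (2*(n:ℝ)+1) * G := by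
    show ((2*n+1).factorial:ℝ) = _
    rw [Nat.factorial_succ]
    push_cast; ring
  set t : ℝ := (n:ℝ)^(2*n) with ht
  have ht0 : (0:ℝ) ≤ t := by positivity
  rw [div_le_one (by positivity)]
  have key : (n:ℝ) ^ (2*α*(n:ℝ)) * A ^ ((1:ℝ)-α) * F^4 = (t/A)^α * (A * F^4) := by
    rw [Real.div_rpow ht0 hA0.le, Real.rpow_sub hA0, Real.rpow_one,
      show 2*α*(n:ℝ) = ((2*n:ℕ):ℝ)*α by push_cast; ring,
      Real.rpow_mul hN0, Real.rpow_natCast]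
    have hAα : (0:ℝ) < A^α := Real.rpow_pos_of_pos hA0 α
    field_simp
    ring
  rw [key]
  have hs0 : (0:ℝ) ≤ t/A := by positivity
  rcases le_or_gt t A with hc | hc
  · -- base ≤ 1
    have h1 : (t/A)^α ≤ 1 :=
      Real.rpow_le_one hs0 ((div_le_one hA0).mpr hc) hα0
    have hF2 : F^2 ≤ G := by
      have := aux_sq_fact n
      have : (↑(n.factorial * n.factorial) : ℝ) ≤ (↑((2*n).factorial) : ℝ) := Nat.cast_le.mpr this
      push_cast at this
      nlinarith
    calc (t/A)^α * (A * F^4) ≤ 1 * (A * F^4) := by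
          apply mul_le_mul_of_nonneg_right h1 (by positivity)
      _ = (2*(n:ℝ)+1) * (G * F^4) := by rw [hAeq]; ring
      _ ≤ (2*(n:ℝ)+1) * (G * G^2) := by
          have : F^4 = (F^2)^2 := by ring
          rw [this]
          have h : (F^2)^2 ≤ G^2 := pow_le_pow_left₀ (by positivity) hF2 2
          nlinarith
      _ = (2*(n:ℝ)+1) * G^3 := by ring
  · -- base ≥ 1
    have hs1 : (1:ℝ) ≤ t/A := (one_le_div hA0).mpr hc.le
    have h1 : (t/A)^α ≤ (t/A)^((1:ℝ)/4) :=
      Real.rpow_le_rpow_of_exponent_le hs1 hα4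
    have step : (t/A)^((1:ℝ)/4) * (A * F^4) ≤ (2*(n:ℝ)+1) * G^3 := by
      apply le_of_pow_le_pow_left₀ (show 4 ≠ 0 by norm_num) (by positivity)
      have hq : ((t/A)^((1:ℝ)/4))^(4:ℕ) = t/A := by
        rw [← Real.rpow_natCast ((t/A)^((1:ℝ)/4)) 4, ← Real.rpow_mul hs0]
        norm_num
      have hnat : t * F^16 ≤ (2*(n:ℝ)+1) * G^9 := by
        have h := aux_key n hn
        have h' := (Nat.cast_le (α := ℝ)).mpr h
        push_cast at h'
        convert h' using 2 <;> push_cast <;> ring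
      calc ((t/A)^((1:ℝ)/4) * (A * F^4))^4 = (t/A) * (A*F^4)^4 := by rw [mul_pow, hq]
        _ = t * A^3 * F^16 := by field_simp
        _ = (2*(n:ℝ)+1)^3 * G^3 * (t * F^16) := by rw [hAeq]; ring
        _ ≤ (2*(n:ℝ)+1)^3 * G^3 * ((2*(n:ℝ)+1) * G^9) := by
            apply mul_le_mul_of_nonneg_left hnat (by positivity)
        _ = ((2*(n:ℝ)+1) * G^3)^4 := by ring
    calc (t/A)^α * (A*F^4) ≤ (t/A)^((1:ℝ)/4) * (A*F^4) := by
          apply mul_le_mul_of_nonneg_right h1 (by positivity)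
      _ ≤ (2*(n:ℝ)+1) * G^3 := step
end

section
/- Let d ∈ ℕ and let (RN_{n,M,Q})_{n,M,Q∈ℤ} ⊆ ℕ_0 be natural numbers satisfying RN_{0,M,Q} = 0 for all M, Q ∈ ℕ and RN_{n,M,Q} ≤ d M^n + Σ_{l=0}^{n−1} [ Q M^{n−l} ( d + RN_{l,M,Q} + 1_ℕ(l) · RN_{l−1,M,Q} ) ] for all n, M, Q ∈ ℕ, where 1_ℕ(l) = 1 if l ≥ 1 and 1_ℕ(0) = 0. Then for every N ∈ ℕ it holds that RN_{N,N,N} ≤ 8 d N^{2N}. -/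
lemma geo_aux (N : ℕ) : ∀ m : ℕ, (N+1) * ∑ i ∈ Finset.range m, (N+2)^i + 1 = (N+2)^m := by
  intro m
  induction m with
  | zero => simp
  | succ m ih =>
    rw [Finset.sum_range_succ, Nat.mul_add, pow_succ]
    nlinarith [ih]

lemma pow_bound (N : ℕ) (hN : 1 ≤ N) : (N+2)^N ≤ 8 * N^N := by
  have hx : (0:ℝ) < (N:ℝ) := by exact_mod_cast hN
  rw [← Nat.cast_le (α := ℝ)]
  push_cast
  have h1 : ((N:ℝ) + 2) ≤ N * Real.exp (2 / N) := by
    have h := Real.add_one_le_exp (2 / (N:ℝ))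
    have : (N:ℝ) + 2 = N * (2 / N + 1) := by field_simp; ring
    rw [this]
    exact mul_le_mul_of_nonneg_left h hx.le
  have hexp2 : Real.exp 2 ≤ 8 := by
    have h := Real.exp_one_lt_d9
    have h2 : Real.exp 2 = Real.exp 1 * Real.exp 1 := by
      rw [← Real.exp_add]; norm_num
    nlinarith [Real.exp_pos 1]
  calc ((N:ℝ)+2)^N ≤ ((N:ℝ) * Real.exp (2 / N))^N := by
        apply pow_le_pow_left₀ (by positivity) h1
    _ = (N:ℝ)^N * Real.exp (2/N)^N := mul_pow _ _ _
    _ = (N:ℝ)^N * Real.exp 2 := by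
        rw [← Real.exp_nat_mul]
        congr 1
        field_simp
    _ ≤ (N:ℝ)^N * 8 := by
        apply mul_le_mul_of_nonneg_left hexp2 (by positivity)
    _ = 8 * (N:ℝ)^N := by ring

theorem stmt16 (d : ℕ) (hd : 1 ≤ d)
    (RN : ℕ → ℕ → ℕ → ℕ)
    (hRN0 : ∀ M Q : ℕ, 1 ≤ M → 1 ≤ Q → RN 0 M Q = 0)
    (hRNrec : ∀ n M Q : ℕ, 1 ≤ n → 1 ≤ M → 1 ≤ Q →
      RN n M Q ≤ d * M ^ n + ∑ l ∈ Finset.range n,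
        Q * M ^ (n - l) * (d + RN l M Q + if 1 ≤ l then RN (l - 1) M Q else 0))
    (N : ℕ) (hN : 1 ≤ N) :
    RN N N N ≤ 8 * d * N ^ (2 * N) := by
  have key : ∀ n : ℕ, RN n N N + d * N ^ n ≤ d * (N+2)^n * N^n := by
    intro n
    induction n using Nat.strong_induction_on with
    | _ n ih =>
      obtain _ | m := n
      · simp [hRN0 N N hN hN]
      · have h1 := hRNrec (m+1) N N (by omega) hN hN
        rw [Finset.sum_range_succ'] at h1
        have hf0 : N * N ^ (m + 1 - 0) * (d + RN 0 N N + if 1 ≤ 0 then RN (0-1) N N else 0)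
            = d * (N * N ^ (m+1)) := by
          rw [if_neg (by omega), hRN0 N N hN hN, Nat.sub_zero]; ring
        rw [hf0] at h1
        set S := ∑ i ∈ Finset.range m, (N+2)^i with hS
        have hterm : ∀ i ∈ Finset.range m,
            N * N ^ (m + 1 - (i+1)) * (d + RN (i+1) N N + if 1 ≤ i+1 then RN (i+1-1) N N else 0)
              ≤ d * N ^ (m+1) + d * (N+1)^2 * N^(m+1) * (N+2)^i := by
          intro i hi
          rw [Finset.mem_range] at hi
          rw [if_pos (by omega), Nat.add_sub_cancel, Nat.succ_sub_succ]
          have h2 : RN (i+1) N N ≤ d * (N+2)^(i+1) * N^(i+1) :=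
            le_trans (Nat.le_add_right _ _) (ih (i+1) (by omega))
          have h3 : RN i N N ≤ d * (N+2)^i * N^i :=
            le_trans (Nat.le_add_right _ _) (ih i (by omega))
          obtain ⟨j, hj⟩ : ∃ j, m - i = j ∧ m = i + j := ⟨m - i, rfl, by omega⟩
          calc N * N ^ (m - i) * (d + RN (i+1) N N + RN i N N)
              ≤ N * N ^ (m - i) * (d + d * (N+2)^(i+1) * N^(i+1) + d * (N+2)^i * N^i) := by
                exact Nat.mul_le_mul_left _ (add_le_add (add_le_add le_rfl h2) h3)
            _ = N * N ^ j * (d + d * (N+2)^(i+1) * N^(i+1) + d * (N+2)^i * N^i) := by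
                rw [hj.1]
            _ = d * N^(j+1) + d * (N+1)^2 * N^(i+j+1) * (N+2)^i := by ring
            _ ≤ d * N ^ (m+1) + d * (N+1)^2 * N^(m+1) * (N+2)^i := by
                have h4 : N^(j+1) ≤ N^(m+1) := Nat.pow_le_pow_right hN (by omega)
                have h5 : i + j + 1 = m + 1 := by omega
                rw [h5]
                gcongr
        have hsum := Finset.sum_le_sum hterm
        rw [Finset.sum_add_distrib, Finset.sum_const, ← Finset.mul_sum, ← hS] at hsum
        simp only [smul_eq_mul] at hsum
        rw [Finset.card_range] at hsum
        -- assemble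
        have hcore : m + 2 + N + (N+1)^2 * S ≤ (N+2) * (N+2)^m := by
          have hg := geo_aux N m
          rw [← hS] at hg
          have hm2 : m ≤ (N+1) * S := by
            have h6 : m < 2^m := Nat.lt_two_pow_self
            have h7 : 2^m ≤ (N+2)^m := Nat.pow_le_pow_left (by omega) m
            omega
          rw [← hg]
          nlinarith [hm2]
        calc RN (m+1) N N + d * N ^ (m+1)
            ≤ (d * N ^ (m+1) + ((m * (d * N ^ (m+1)) + d * (N+1)^2 * N^(m+1) * S)
                + d * (N * N ^ (m+1)))) + d * N ^ (m+1) := by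
              exact add_le_add_left (le_trans h1 (add_le_add_right (add_le_add_left hsum _) _)) _
          _ = d * N^(m+1) * (m + 2 + N + (N+1)^2 * S) := by ring
          _ ≤ d * N^(m+1) * ((N+2) * (N+2)^m) := Nat.mul_le_mul_left _ hcore
          _ = d * (N+2)^(m+1) * N^(m+1) := by rw [pow_succ]; ring
  have h8 := key N
  have h9 := pow_bound N hN
  have h10 : N ^ (2 * N) = N^N * N^N := by rw [two_mul, pow_add]
  calc RN N N N ≤ d * (N+2)^N * N^N := by omega
    _ ≤ d * (8 * N^N) * N^N := by
        apply Nat.mul_le_mul_right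
        exact Nat.mul_le_mul_left _ h9
    _ = 8 * d * N ^ (2*N) := by rw [h10]; ring
end

section
/- Let (FE_{n,M,Q})_{n,M,Q∈ℤ} ⊆ ℕ_0 be natural numbers satisfying FE_{0,M,Q} = 0 for all M, Q ∈ ℕ and FE_{n,M,Q} ≤ M^n + Σ_{l=0}^{n−1} [ Q M^{n−l} ( 1 + FE_{l,M,Q} + 1_ℕ(l) + 1_ℕ(l) · FE_{l−1,M,Q} ) ] for all n, M, Q ∈ ℕ, where 1_ℕ(l) = 1 if l ≥ 1 and 1_ℕ(0) = 0. Then for every N ∈ ℕ it holds that FE_{N,N,N} ≤ 8 N^{2N}. -/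
private lemma expBound17 (a : ℕ) (ha : 1 ≤ a) :
    3 * (a + 1) ^ (a + 1) ≤ 16 * a ^ (a + 1) := by
  rcases Nat.lt_or_ge a 2 with h2 | h2
  · have : a = 1 := by omega
    subst this
    norm_num
  · have hx : (2 : ℝ) ≤ (a : ℝ) := by exact_mod_cast h2
    have hx0 : (0 : ℝ) < (a : ℝ) := by linarith
    rw [← Nat.cast_le (α := ℝ)]
    push_cast
    set x : ℝ := (a : ℝ) with hxdef
    have h1 : x + 1 ≤ x * Real.exp (1 / x) := by
      have h0 := Real.add_one_le_exp (1 / x)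
      calc x + 1 = x * (1 / x + 1) := by field_simp; ring
        _ ≤ x * Real.exp (1 / x) := mul_le_mul_of_nonneg_left h0 (le_of_lt hx0)
    have h2' : (x + 1) ^ a ≤ (x * Real.exp (1 / x)) ^ a :=
      pow_le_pow_left₀ (by linarith) h1 a
    have h3 : (x * Real.exp (1 / x)) ^ a = x ^ a * Real.exp 1 := by
      rw [mul_pow, ← Real.exp_nat_mul]
      congr 1
      rw [hxdef]
      field_simp
    have he : Real.exp 1 ≤ 2.7182818286 := le_of_lt Real.exp_one_lt_d9
    have hexp_pos : (0 : ℝ) < Real.exp 1 := Real.exp_pos 1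
    have hxa : (0 : ℝ) ≤ x ^ a := by positivity
    have hkey : (x + 1) ^ a ≤ x ^ a * Real.exp 1 := h3 ▸ h2'
    have hquot : 3 * Real.exp 1 * (x + 1) ≤ 16 * x := by nlinarith
    have hx1 : (0 : ℝ) ≤ x + 1 := by linarith
    calc 3 * (x + 1) ^ (a + 1) = 3 * ((x + 1) ^ a * (x + 1)) := by ring
      _ ≤ 3 * ((x ^ a * Real.exp 1) * (x + 1)) := by
          nlinarith [mul_le_mul_of_nonneg_right hkey hx1]
      _ = x ^ a * (3 * Real.exp 1 * (x + 1)) := by ring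
      _ ≤ x ^ a * (16 * x) := mul_le_mul_of_nonneg_left hquot hxa
      _ = 16 * x ^ (a + 1) := by ring

private lemma sumBound17 (F : ℕ → ℕ) (a n : ℕ) (ha : 1 ≤ a) (hF0 : F 0 = 0)
    (hIH : ∀ l, l < n → 2 * a ^ l * F l ≤ 3 * (a + 1) ^ (3 * l)) :
    ∀ m, m ≤ n →
      2 * a ^ n * (a + 1) ^ n + ∑ l ∈ Finset.range m,
        2 * a ^ n * ((a + 1) * (a + 1) ^ (n - l) *
          (1 + F l + (if 1 ≤ l then 1 else 0) + if 1 ≤ l then F (l - 1) else 0))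
      ≤ (if m ≤ 1 then 2 else 3) * a ^ (n - m) * (a + 1) ^ (n + 2 * m) := by
  intro m
  induction m with
  | zero => intro _; simp
  | succ m ih =>
    intro hmn
    have hm : m ≤ n := Nat.le_of_succ_le hmn
    obtain ⟨j, hj⟩ : ∃ j, n = m + 1 + j := ⟨n - (m + 1), by omega⟩
    subst hj
    have hsum := ih hm
    rw [Finset.sum_range_succ, ← add_assoc]
    rcases m with _ | m
    · -- m = 0
      rw [if_pos (by omega : (1:ℕ) ≤ 1)]
      simp only [Finset.range_zero, Finset.sum_empty, add_zero]
      rw [if_neg (by omega : ¬ (1:ℕ) ≤ 0), if_neg (by omega : ¬ (1:ℕ) ≤ 0), hF0]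
      have e1 : 0 + 1 + j - 0 = j + 1 := by omega
      have e2 : 0 + 1 + j - 1 = j := by omega
      rw [e1, e2]
      calc 2 * a ^ (0 + 1 + j) * (a + 1) ^ (0 + 1 + j) +
            2 * a ^ (0 + 1 + j) * ((a + 1) * (a + 1) ^ (j + 1) * (1 + 0 + 0 + 0))
          = a ^ j * (a + 1) ^ j * (2 * a * (a + 1) + 2 * a * (a + 1) ^ 2) := by ring
        _ ≤ a ^ j * (a + 1) ^ j * (2 * (a + 1) ^ 3) := by
            exact mul_le_mul_right (by nlinarith) _
        _ = 2 * a ^ j * (a + 1) ^ (0 + 1 + j + 2 * 1) := by ring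
    · rcases m with _ | k
      · -- m = 1
        rw [if_pos (by omega : (1:ℕ) ≤ 1)] at hsum
        rw [if_neg (by omega : ¬ (2:ℕ) ≤ 1)]
        have e1 : 1 + 1 + j - 1 = j + 1 := by omega
        have e2 : 1 + 1 + j - 2 = j := by omega
        rw [e1] at hsum
        rw [e1, e2]
        simp only [if_pos (le_refl 1), Nat.sub_self, hF0]
        have hF1 : 2 * a ^ 1 * F 1 ≤ 3 * (a + 1) ^ (3 * 1) := hIH 1 (by omega)
        have hterm : 2 * a ^ (1 + 1 + j) * ((a + 1) * (a + 1) ^ (j + 1) * (1 + F 1 + 1 + 0))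
            ≤ 4 * a ^ (j + 2) * (a + 1) ^ (j + 2) + 3 * a ^ (j + 1) * (a + 1) ^ (j + 5) := by
          calc 2 * a ^ (1 + 1 + j) * ((a + 1) * (a + 1) ^ (j + 1) * (1 + F 1 + 1 + 0))
              = a ^ (j + 1) * (a + 1) ^ (j + 2) * (2 * a ^ 1 * F 1)
                + 4 * a ^ (j + 2) * (a + 1) ^ (j + 2) := by ring
            _ ≤ a ^ (j + 1) * (a + 1) ^ (j + 2) * (3 * (a + 1) ^ (3 * 1))
                + 4 * a ^ (j + 2) * (a + 1) ^ (j + 2) :=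
                add_le_add_left (mul_le_mul_right hF1 _) _
            _ = 4 * a ^ (j + 2) * (a + 1) ^ (j + 2) + 3 * a ^ (j + 1) * (a + 1) ^ (j + 5) := by
                ring
        calc 2 * a ^ (1 + 1 + j) * (a + 1) ^ (1 + 1 + j) +
              (∑ l ∈ Finset.range 1, 2 * a ^ (1 + 1 + j) * ((a + 1) * (a + 1) ^ (1 + 1 + j - l) *
                (1 + F l + (if 1 ≤ l then 1 else 0) + if 1 ≤ l then F (l - 1) else 0))) +
              2 * a ^ (1 + 1 + j) * ((a + 1) * (a + 1) ^ (j + 1) * (1 + F 1 + 1 + 0))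
            ≤ 2 * a ^ (j + 1) * (a + 1) ^ (1 + 1 + j + 2 * 1) +
              (4 * a ^ (j + 2) * (a + 1) ^ (j + 2) + 3 * a ^ (j + 1) * (a + 1) ^ (j + 5)) :=
              add_le_add hsum hterm
          _ = a ^ j * (a + 1) ^ (j + 2) *
              (2 * a * (a + 1) ^ 2 + 4 * a ^ 2 + 3 * a * (a + 1) ^ 3) := by ring
          _ ≤ a ^ j * (a + 1) ^ (j + 2) * (3 * (a + 1) ^ 4) := by
              exact mul_le_mul_right (by nlinarith) _
          _ = 3 * a ^ j * (a + 1) ^ (1 + 1 + j + 2 * 2) := by ring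
      · -- m = k + 2
        rw [if_neg (by omega : ¬ k + 2 ≤ 1)] at hsum
        rw [if_neg (by omega : ¬ k + 2 + 1 ≤ 1)]
        have e1 : k + 2 + 1 + j - (k + 2) = j + 1 := by omega
        have e2 : k + 2 + 1 + j - (k + 2 + 1) = j := by omega
        have e3 : k + 2 - 1 = k + 1 := by omega
        rw [e1] at hsum ⊢
        rw [e2, e3, if_pos (by omega : (1:ℕ) ≤ k + 2), if_pos (by omega : (1:ℕ) ≤ k + 2)]
        have hIHa : 2 * a ^ (k + 2) * F (k + 2) ≤ 3 * (a + 1) ^ (3 * (k + 2)) :=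
          hIH (k + 2) (by omega)
        have hIHb : 2 * a ^ (k + 1) * F (k + 1) ≤ 3 * (a + 1) ^ (3 * (k + 1)) :=
          hIH (k + 1) (by omega)
        have hak : a ^ (k + 3) ≤ a ^ 3 * (a + 1) ^ (3 * k) := by
          calc a ^ (k + 3) = a ^ k * a ^ 3 := by ring
            _ ≤ (a + 1) ^ (3 * k) * a ^ 3 := by
                exact mul_le_mul_left ((Nat.pow_le_pow_left (by omega) k).trans
                  (Nat.pow_le_pow_right (by omega) (by omega))) _
            _ = a ^ 3 * (a + 1) ^ (3 * k) := by ring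
        have hterm : 2 * a ^ (k + 2 + 1 + j) * ((a + 1) * (a + 1) ^ (j + 1) *
              (1 + F (k + 2) + 1 + F (k + 1)))
            ≤ a ^ j * (a + 1) ^ (3 * k + j + 2) *
              (4 * a ^ 3 + 3 * a * (a + 1) ^ 6 + 3 * a ^ 2 * (a + 1) ^ 3) := by
          calc 2 * a ^ (k + 2 + 1 + j) * ((a + 1) * (a + 1) ^ (j + 1) *
                (1 + F (k + 2) + 1 + F (k + 1)))
              = 4 * (a ^ (k + 3) * (a ^ j * (a + 1) ^ (j + 2)))
                + a ^ (j + 1) * (a + 1) ^ (j + 2) * (2 * a ^ (k + 2) * F (k + 2))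
                + a ^ (j + 2) * (a + 1) ^ (j + 2) * (2 * a ^ (k + 1) * F (k + 1)) := by ring
            _ ≤ 4 * ((a ^ 3 * (a + 1) ^ (3 * k)) * (a ^ j * (a + 1) ^ (j + 2)))
                + a ^ (j + 1) * (a + 1) ^ (j + 2) * (3 * (a + 1) ^ (3 * (k + 2)))
                + a ^ (j + 2) * (a + 1) ^ (j + 2) * (3 * (a + 1) ^ (3 * (k + 1))) := by
                refine add_le_add (add_le_add ?_ ?_) ?_
                · exact mul_le_mul_right (mul_le_mul_left hak _) _
                · exact mul_le_mul_right hIHa _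
                · exact mul_le_mul_right hIHb _
            _ = a ^ j * (a + 1) ^ (3 * k + j + 2) *
                (4 * a ^ 3 + 3 * a * (a + 1) ^ 6 + 3 * a ^ 2 * (a + 1) ^ 3) := by ring
        calc 2 * a ^ (k + 2 + 1 + j) * (a + 1) ^ (k + 2 + 1 + j) +
              (∑ l ∈ Finset.range (k + 2), 2 * a ^ (k + 2 + 1 + j) *
                ((a + 1) * (a + 1) ^ (k + 2 + 1 + j - l) *
                (1 + F l + (if 1 ≤ l then 1 else 0) + if 1 ≤ l then F (l - 1) else 0))) +
              2 * a ^ (k + 2 + 1 + j) * ((a + 1) * (a + 1) ^ (j + 1) *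
                (1 + F (k + 2) + 1 + F (k + 1)))
            ≤ 3 * a ^ (j + 1) * (a + 1) ^ (k + 2 + 1 + j + 2 * (k + 2)) +
              a ^ j * (a + 1) ^ (3 * k + j + 2) *
                (4 * a ^ 3 + 3 * a * (a + 1) ^ 6 + 3 * a ^ 2 * (a + 1) ^ 3) :=
              add_le_add hsum hterm
          _ = a ^ j * (a + 1) ^ (3 * k + j + 2) *
              (3 * a * (a + 1) ^ 5 + (4 * a ^ 3 + 3 * a * (a + 1) ^ 6 + 3 * a ^ 2 * (a + 1) ^ 3)) := by
              ring
          _ ≤ a ^ j * (a + 1) ^ (3 * k + j + 2) * (3 * (a + 1) ^ 7) := by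
              exact mul_le_mul_right (by nlinarith) _
          _ = 3 * a ^ j * (a + 1) ^ (k + 2 + 1 + j + 2 * (k + 2 + 1)) := by ring

private lemma master17
    (FE : ℕ → ℕ → ℕ → ℕ)
    (hFE0 : ∀ M Q : ℕ, 1 ≤ M → 1 ≤ Q → FE 0 M Q = 0)
    (hFErec : ∀ n M Q : ℕ, 1 ≤ n → 1 ≤ M → 1 ≤ Q →
      FE n M Q ≤ M ^ n + ∑ l ∈ Finset.range n,
        Q * M ^ (n - l) * (1 + FE l M Q + (if 1 ≤ l then 1 else 0)
          + if 1 ≤ l then FE (l - 1) M Q else 0))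
    (a : ℕ) (ha : 1 ≤ a) :
    ∀ n, 2 * a ^ n * FE n (a + 1) (a + 1) ≤ 3 * (a + 1) ^ (3 * n) := by
  intro n
  induction n using Nat.strong_induction_on with
  | _ n ih =>
    rcases n with _ | n
    · rw [hFE0 (a + 1) (a + 1) (by omega) (by omega)]
      simp
    · have h := hFErec (n + 1) (a + 1) (a + 1) (by omega) (by omega) (by omega)
      have hmul := mul_le_mul_right h (2 * a ^ (n + 1))
      rw [mul_add, Finset.mul_sum] at hmul
      have hs := sumBound17 (fun l => FE l (a + 1) (a + 1)) a (n + 1) ha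
        (hFE0 (a + 1) (a + 1) (by omega) (by omega))
        (fun l hl => ih l hl) (n + 1) le_rfl
      calc 2 * a ^ (n + 1) * FE (n + 1) (a + 1) (a + 1)
          ≤ 2 * a ^ (n + 1) * (a + 1) ^ (n + 1) + ∑ l ∈ Finset.range (n + 1),
            2 * a ^ (n + 1) * ((a + 1) * (a + 1) ^ (n + 1 - l) *
              (1 + FE l (a + 1) (a + 1) + (if 1 ≤ l then 1 else 0)
                + if 1 ≤ l then FE (l - 1) (a + 1) (a + 1) else 0)) := hmul
        _ ≤ (if n + 1 ≤ 1 then 2 else 3) * a ^ (n + 1 - (n + 1)) *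
            (a + 1) ^ (n + 1 + 2 * (n + 1)) := hs
        _ ≤ 3 * (a + 1) ^ (3 * (n + 1)) := by
            have e : n + 1 + 2 * (n + 1) = 3 * (n + 1) := by ring
            rw [e, Nat.sub_self, pow_zero, mul_one]
            exact Nat.mul_le_mul_right _ (by split_ifs <;> omega)

theorem stmt17
    (FE : ℕ → ℕ → ℕ → ℕ)
    (hFE0 : ∀ M Q : ℕ, 1 ≤ M → 1 ≤ Q → FE 0 M Q = 0)
    (hFErec : ∀ n M Q : ℕ, 1 ≤ n → 1 ≤ M → 1 ≤ Q →
      FE n M Q ≤ M ^ n + ∑ l ∈ Finset.range n,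
        Q * M ^ (n - l) * (1 + FE l M Q + (if 1 ≤ l then 1 else 0)
          + if 1 ≤ l then FE (l - 1) M Q else 0))
    (N : ℕ) (hN : 1 ≤ N) :
    FE N N N ≤ 8 * N ^ (2 * N) := by
  rcases Nat.lt_or_ge N 2 with h2 | h2
  · have hN1 : N = 1 := by omega
    subst hN1
    have h := hFErec 1 1 1 le_rfl le_rfl le_rfl
    rw [Finset.sum_range_one, hFE0 1 1 le_rfl le_rfl] at h
    norm_num at h ⊢
    omega
  · obtain ⟨a, ha, rfl⟩ : ∃ a, 1 ≤ a ∧ N = a + 1 := ⟨N - 1, by omega, by omega⟩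
    have hm := master17 FE hFE0 hFErec a ha (a + 1)
    have hB := expBound17 a ha
    have hfin : 2 * a ^ (a + 1) * FE (a + 1) (a + 1) (a + 1)
        ≤ 2 * a ^ (a + 1) * (8 * (a + 1) ^ (2 * (a + 1))) := by
      calc 2 * a ^ (a + 1) * FE (a + 1) (a + 1) (a + 1)
          ≤ 3 * (a + 1) ^ (3 * (a + 1)) := hm
        _ = 3 * (a + 1) ^ (a + 1) * (a + 1) ^ (2 * (a + 1)) := by ring
        _ ≤ 16 * a ^ (a + 1) * (a + 1) ^ (2 * (a + 1)) := Nat.mul_le_mul_right _ hB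
        _ = 2 * a ^ (a + 1) * (8 * (a + 1) ^ (2 * (a + 1))) := by ring
    exact Nat.le_of_mul_le_mul_left hfin (by positivity)
end
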